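/- arXiv:0909.4242 — 5 statements merged into one kernel-verified Lean document; each statement's English description precedes it below -/
import Mathlib

section
/- Let L be the first-order language of groups and let G be a group, regarded as an L-structure. Assume G is inp-minimal. Then there exists a subgroup H of G such that: H is normal in G, H is abelian, the underlying set of H is definable in G by an L-formula without parameters, and there is an integer n ≥ 1 with g^n ∈ H for every g ∈ G (i.e., the quotient G/H has finite exponent). -/
open FirstOrder FirstOrder.Language

universe u v w

/-- `N` carries an inp-pattern of length two (in a single free variable). -/
def HasInpPattern (L : FirstOrder.Language.{v, w}) (N : Type*) [L.Structure N] : Prop :=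
  ∃ (m₁ m₂ k₁ k₂ : ℕ) (φ : L.Formula (Unit ⊕ Fin m₁)) (ψ : L.Formula (Unit ⊕ Fin m₂))
    (a : ℕ → Fin m₁ → N) (b : ℕ → Fin m₂ → N),
    2 ≤ k₁ ∧ 2 ≤ k₂ ∧
    (∀ (c : N) (s : Finset ℕ),
      (∀ i ∈ s, φ.Realize (Sum.elim (fun _ => c) (a i))) → s.card < k₁) ∧
    (∀ (c : N) (s : Finset ℕ),
      (∀ j ∈ s, ψ.Realize (Sum.elim (fun _ => c) (b j))) → s.card < k₂) ∧
    (∀ i j : ℕ, ∃ c : N,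
      φ.Realize (Sum.elim (fun _ => c) (a i)) ∧ ψ.Realize (Sum.elim (fun _ => c) (b j)))

/-- `M` is inp-minimal: no structure elementarily equivalent to `M` carries an
inp-pattern of length two in a single free variable. -/
def IsInpMinimal (L : FirstOrder.Language.{v, w}) (M : Type u) [L.Structure M] : Prop :=
  ∀ (N : Type (max u v w)) (S : L.Structure N),
    L.completeTheory M = @Language.completeTheory L N S → ¬ @HasInpPattern L N S

/-- The first-order language of groups: a binary operation, a unary inverse, a constant. -/
def groupLang : Language where
  Functions := fun n =>
    match n with
    | 0 => Unit
    | 1 => Unit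
    | 2 => Unit
    | _ => Empty
  Relations := fun _ => Empty

/-- A group, regarded as a `groupLang`-structure. -/
instance groupLangStructure (G : Type u) [Group G] : groupLang.Structure G where
  funMap {n} f :=
    match n, f with
    | 0, _ => fun _ => (1 : G)
    | 1, _ => fun x => (x 0)⁻¹
    | 2, _ => fun x => x 0 * x 1
    | (_ + 3), f => Empty.elim f
  RelMap {n} r := Empty.elim r


/- ### Auxiliary development -/

open Filter FirstOrder.Language.Structure

namespace InpAux

/- ## Terms and formulas over `groupLang` -/

def mulT {α : Type*} (t s : groupLang.Term α) : groupLang.Term α :=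
  Term.func (L := groupLang) (l := 2) () ![t, s]
def invT {α : Type*} (t : groupLang.Term α) : groupLang.Term α :=
  Term.func (L := groupLang) (l := 1) () ![t]
def oneT {α : Type*} : groupLang.Term α := Term.func (L := groupLang) (l := 0) () ![]

def powT {α : Type*} (m : ℕ) (t : groupLang.Term α) : groupLang.Term α :=
  Nat.rec oneT (fun _ ih => mulT ih t) m

variable {G : Type u} [Group G]

@[simp] lemma realize_mulT {α : Type*} (v : α → G) (t s : groupLang.Term α) :
    (mulT t s).realize v = t.realize v * s.realize v := rfl
@[simp] lemma realize_invT {α : Type*} (v : α → G) (t : groupLang.Term α) :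
    (invT t).realize v = (t.realize v)⁻¹ := rfl
@[simp] lemma realize_oneT {α : Type*} (v : α → G) : (oneT).realize v = (1 : G) := rfl

@[simp] lemma realize_powT {α : Type*} (v : α → G) (m : ℕ) (t : groupLang.Term α) :
    (powT m t).realize v = t.realize v ^ m := by
  induction m with
  | zero => simp [powT]
  | succ k ih =>
    show (mulT (powT k t) t).realize v = _
    rw [realize_mulT, ih, pow_succ]

def xT {m : ℕ} : groupLang.Term (Unit ⊕ Fin m) := Term.var (Sum.inl ())
def pT {m : ℕ} (i : Fin m) : groupLang.Term (Unit ⊕ Fin m) := Term.var (Sum.inr i)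

/-- φpat: (x * p0⁻¹) * p1 = p1 * (x * p0⁻¹)  -/
def φpat : groupLang.Formula (Unit ⊕ Fin 2) :=
  Term.equal (mulT (mulT xT (invT (pT 0))) (pT 1)) (mulT (pT 1) (mulT xT (invT (pT 0))))

/-- ψpat: (p0⁻¹ * x) * p1 = p1 * (p0⁻¹ * x) -/
def ψpat : groupLang.Formula (Unit ⊕ Fin 2) :=
  Term.equal (mulT (mulT (invT (pT 0)) xT) (pT 1)) (mulT (pT 1) (mulT (invT (pT 0)) xT))

lemma realize_φpat (c : G) (p : Fin 2 → G) :
    φpat.Realize (Sum.elim (fun _ => c) p) ↔ Commute (c * (p 0)⁻¹) (p 1) := by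
  simp [φpat, Formula.realize_equal, xT, pT, Commute, SemiconjBy]

lemma realize_ψpat (c : G) (p : Fin 2 → G) :
    ψpat.Realize (Sum.elim (fun _ => c) p) ↔ Commute ((p 0)⁻¹ * c) (p 1) := by
  simp [ψpat, Formula.realize_equal, xT, pT, Commute, SemiconjBy]

/- ## Any group with no inp-pattern has commuting powers -/

lemma rows_aux {a b c : G} {i j : ℕ} (hij : i < j)
    (h1 : Commute (c * (a ^ i)⁻¹) b) (h2 : Commute (c * (a ^ j)⁻¹) b) :
    Commute (a ^ (j - i)) b := by
  have h3 : Commute ((c * (a ^ i)⁻¹)⁻¹ * (c * (a ^ j)⁻¹)) b := h1.inv_left.mul_left h2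
  have hj : a ^ j = a ^ (j - i) * a ^ i := by rw [← pow_add, Nat.sub_add_cancel hij.le]
  have h4 : (c * (a ^ i)⁻¹)⁻¹ * (c * (a ^ j)⁻¹) = (a ^ (j - i))⁻¹ := by
    rw [hj]; group
  rw [h4] at h3
  simpa using h3.inv_left

lemma rows_aux2 {a b c : G} {i j : ℕ} (hij : i < j)
    (h1 : Commute ((b ^ i)⁻¹ * c) a) (h2 : Commute ((b ^ j)⁻¹ * c) a) :
    Commute (b ^ (j - i)) a := by
  have h3 : Commute (((b ^ i)⁻¹ * c) * ((b ^ j)⁻¹ * c)⁻¹) a := h1.mul_left h2.inv_left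
  have hj : b ^ j = b ^ (j - i) * b ^ i := by rw [← pow_add, Nat.sub_add_cancel hij.le]
  have h4 : ((b ^ i)⁻¹ * c) * ((b ^ j)⁻¹ * c)⁻¹ = b ^ (j - i) := by
    rw [hj]; group
  rwa [h4] at h3

lemma lemA {N : Type*} [Group N] (h : ¬ HasInpPattern groupLang N) (a b : N) :
    ∃ k : ℕ, 1 ≤ k ∧ Commute (a ^ k) (b ^ k) := by
  by_cases h1 : ∃ k, 1 ≤ k ∧ Commute (a ^ k) b
  · obtain ⟨k, hk, hc⟩ := h1; exact ⟨k, hk, hc.pow_right k⟩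
  by_cases h2 : ∃ k, 1 ≤ k ∧ Commute a (b ^ k)
  · obtain ⟨k, hk, hc⟩ := h2; exact ⟨k, hk, (hc.pow_left k)⟩
  exfalso
  push_neg at h1 h2
  apply h
  refine ⟨2, 2, 2, 2, φpat, ψpat, fun i => ![a ^ i, b], fun j => ![b ^ j, a],
    le_refl 2, le_refl 2, ?_, ?_, ?_⟩
  · intro c s hs
    rw [show (2 : ℕ) = 1 + 1 from rfl, Nat.lt_succ_iff]
    apply Finset.card_le_one.2
    intro i hi j hj
    by_contra hne
    have hi' := (realize_φpat c _).1 (hs i hi)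
    have hj' := (realize_φpat c _).1 (hs j hj)
    simp only [Matrix.cons_val_zero, Matrix.cons_val_one, Matrix.head_cons] at hi' hj'
    rcases lt_or_gt_of_ne hne with hlt | hlt
    · exact h1 (j - i) (Nat.one_le_iff_ne_zero.2 (Nat.sub_ne_zero_of_lt hlt)) (rows_aux hlt hi' hj')
    · exact h1 (i - j) (Nat.one_le_iff_ne_zero.2 (Nat.sub_ne_zero_of_lt hlt)) (rows_aux hlt hj' hi')
  · intro c s hs
    rw [show (2 : ℕ) = 1 + 1 from rfl, Nat.lt_succ_iff]
    apply Finset.card_le_one.2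
    intro i hi j hj
    by_contra hne
    have hi' := (realize_ψpat c _).1 (hs i hi)
    have hj' := (realize_ψpat c _).1 (hs j hj)
    simp only [Matrix.cons_val_zero, Matrix.cons_val_one, Matrix.head_cons] at hi' hj'
    rcases lt_or_gt_of_ne hne with hlt | hlt
    · exact h2 (j - i) (Nat.one_le_iff_ne_zero.2 (Nat.sub_ne_zero_of_lt hlt))
        (rows_aux2 hlt hi' hj').symm
    · exact h2 (i - j) (Nat.one_le_iff_ne_zero.2 (Nat.sub_ne_zero_of_lt hlt))
        (rows_aux2 hlt hj' hi').symm
  · intro i j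
    refine ⟨b ^ j * a ^ i, ?_, ?_⟩
    · rw [realize_φpat]
      simp only [Matrix.cons_val_zero, Matrix.cons_val_one, Matrix.head_cons,
        mul_inv_cancel_right]
      exact (Commute.refl b).pow_left j
    · rw [realize_ψpat]
      simp only [Matrix.cons_val_zero, Matrix.cons_val_one, Matrix.head_cons,
        inv_mul_cancel_left]
      exact (Commute.refl a).pow_left i

/- ## The ultrapower as a groupLang structure -/

variable (u : Ultrafilter ℕ)

lemma germ_funMap_eq {n : ℕ} (f : groupLang.Functions n)
    (x : Fin n → Filter.Germ (u : Filter ℕ) G) :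
    @funMap groupLang _ (groupLangStructure _) n f x
      = @funMap groupLang ((u : Filter ℕ).Product (fun _ => G))
          Language.Ultraproduct.structure n f x := by
  have hrep : ∀ i, ∃ r : ℕ → G, x i = ⟦r⟧ := by
    intro i
    obtain ⟨r, hr⟩ := Quotient.exists_rep (x i)
    exact ⟨r, hr.symm⟩
  choose r hr using hrep
  have hx : x = fun i => (⟦r i⟧ : Filter.Germ (u : Filter ℕ) G) := funext hr
  subst hx
  have key := funMap_quotient_mk' ((u : Filter ℕ).productSetoid (fun _ => G))
    (L := groupLang) (ps := Language.Ultraproduct.setoidPrestructure (fun _ => G) u) f r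
  refine Eq.trans ?_ key.symm
  match n, f with
  | 0, _ => rfl
  | 1, _ => rfl
  | 2, _ => rfl
  | n + 3, f => exact f.elim

def germProdEquiv :
    @Language.Equiv groupLang (Filter.Germ (u : Filter ℕ) G)
      ((u : Filter ℕ).Product (fun _ => G)) (groupLangStructure _)
      (Language.Ultraproduct.structure) where
  toEquiv := Equiv.refl _
  map_fun' := by intro n f x; exact germ_funMap_eq u f x
  map_rel' := by intro n r; exact r.elim

lemma completeTheory_germ :
    groupLang.completeTheory G = groupLang.completeTheory (Filter.Germ (u : Filter ℕ) G) := by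
  have h1 : groupLang.ElementarilyEquivalent G ((u : Filter ℕ).Product fun _ => G) :=
    elementarilyEquivalent_iff.2 (fun φ => by
      rw [Ultraproduct.sentence_realize]
      exact (Filter.eventually_const).symm)
  have h2 := StrongHomClass.elementarilyEquivalent (germProdEquiv (G := G) u)
  exact h1.trans h2.symm

/- ## Uniformity via ultrapower -/

lemma uniform_comm {G : Type u} [Group G] (hG : IsInpMinimal groupLang G) :
    ∃ n : ℕ, 1 ≤ n ∧ ∀ g h : G, Commute (g ^ n) (h ^ n) := by
  by_contra hc
  push_neg at hc
  have hfac : ∀ K : ℕ, ∃ g h : G,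
      ¬ (g ^ (K + 1).factorial * h ^ (K + 1).factorial
          = h ^ (K + 1).factorial * g ^ (K + 1).factorial) := by
    intro K
    obtain ⟨g, h, hgh⟩ := hc (K + 1).factorial (K + 1).factorial_pos
    exact ⟨g, h, hgh⟩
  choose g h hgh using hfac
  have hkey : ∀ k K : ℕ, 1 ≤ k → k ≤ K + 1 → ¬ Commute (g K ^ k) (h K ^ k) := by
    intro k K h1 h2 hcom
    apply hgh K
    obtain ⟨m, hm⟩ := Nat.dvd_factorial h1 h2
    rw [hm, pow_mul, pow_mul]
    exact hcom.pow_pow m m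
  set U : Ultrafilter ℕ := Ultrafilter.of Filter.cofinite with hU
  have hnp : ¬ HasInpPattern groupLang (Filter.Germ (U : Filter ℕ) G) :=
    hG _ _ (completeTheory_germ U)
  obtain ⟨k, hk1, hkc⟩ := lemA hnp (↑g : Filter.Germ (U : Filter ℕ) G) (↑h)
  rw [← Filter.Germ.coe_pow, ← Filter.Germ.coe_pow] at hkc
  have h2 : ((g ^ k * h ^ k : ℕ → G) : Filter.Germ (U : Filter ℕ) G)
      = ((h ^ k * g ^ k : ℕ → G) : Filter.Germ (U : Filter ℕ) G) := by
    rw [Filter.Germ.coe_mul, Filter.Germ.coe_mul]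
    exact hkc
  have h3 : ∀ᶠ K in (U : Filter ℕ), g K ^ k * h K ^ k = h K ^ k * g K ^ k :=
    Filter.Germ.coe_eq.1 h2
  have h4 : {K : ℕ | g K ^ k * h K ^ k = h K ^ k * g K ^ k} ⊆ Set.Iio k := by
    intro K hK
    by_contra hlt
    simp only [Set.mem_Iio, not_lt] at hlt
    exact hkey k K hk1 (le_trans hlt (Nat.le_succ K)) hK
  have h5 : {K : ℕ | g K ^ k * h K ^ k = h K ^ k * g K ^ k}ᶜ ∈ (U : Filter ℕ) :=
    Ultrafilter.of_le Filter.cofinite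
      (((Set.finite_Iio k).subset h4).compl_mem_cofinite)
  exact (Ultrafilter.compl_mem_iff_notMem.1 h5) h3

/- ## The defining formula for H -/

variable (n : ℕ)

/-- `∀ z, z^n * x = x * z^n` -/
def φ1 : groupLang.BoundedFormula (Fin 1) 0 :=
  BoundedFormula.all (Term.bdEqual
    (mulT (powT n (Term.var (Sum.inr 0))) (Term.var (Sum.inl 0)))
    (mulT (Term.var (Sum.inl 0)) (powT n (Term.var (Sum.inr 0)))))

/-- `∀ z, (∀ w, w^n * z = z * w^n) → z * x = x * z` -/
def φ2 : groupLang.BoundedFormula (Fin 1) 0 :=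
  BoundedFormula.all (BoundedFormula.imp
    (BoundedFormula.all (Term.bdEqual
      (mulT (powT n (Term.var (Sum.inr 1))) (Term.var (Sum.inr 0)))
      (mulT (Term.var (Sum.inr 0)) (powT n (Term.var (Sum.inr 1))))))
    (Term.bdEqual
      (mulT (Term.var (Sum.inr 0)) (Term.var (Sum.inl 0)))
      (mulT (Term.var (Sum.inl 0)) (Term.var (Sum.inr 0)))))

def φH : groupLang.Formula (Fin 1) := (φ1 n) ⊓ (φ2 n)

lemma realize_φH (x : G) :
    (φH n).Realize (fun _ => x) ↔
      ((∀ y : G, y ^ n * x = x * y ^ n) ∧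
        ∀ z : G, (∀ w : G, w ^ n * z = z * w ^ n) → z * x = x * z) := by
  rw [Formula.Realize, φH, BoundedFormula.realize_inf]
  constructor
  · rintro ⟨ha, hb⟩
    constructor
    · intro y
      have := (BoundedFormula.realize_all.1 ha) y
      rw [BoundedFormula.realize_bdEqual] at this
      simpa [Fin.snoc] using this
    · intro z hz
      have := (BoundedFormula.realize_all.1 hb) z
      rw [BoundedFormula.realize_imp] at this
      have h' := this (BoundedFormula.realize_all.2 (fun w => by
        rw [BoundedFormula.realize_bdEqual]
        simpa [Fin.snoc] using hz w))
      rw [BoundedFormula.realize_bdEqual] at h'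
      simpa [Fin.snoc] using h'
  · rintro ⟨ha, hb⟩
    constructor
    · refine BoundedFormula.realize_all.2 (fun y => ?_)
      rw [BoundedFormula.realize_bdEqual]
      simpa [Fin.snoc] using ha y
    · refine BoundedFormula.realize_all.2 (fun z => ?_)
      rw [BoundedFormula.realize_imp]
      intro hz
      rw [BoundedFormula.realize_bdEqual]
      have hz' : ∀ w : G, w ^ n * z = z * w ^ n := by
        intro w
        have := (BoundedFormula.realize_all.1 hz) w
        rw [BoundedFormula.realize_bdEqual] at this
        simpa [Fin.snoc] using this
      simpa [Fin.snoc] using hb z hz'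

/- ## Group-theoretic assembly -/

lemma centralizer_conj {S : Set G} (hS : ∀ z ∈ S, ∀ g : G, g⁻¹ * z * g ∈ S) :
    ∀ x ∈ Subgroup.centralizer S, ∀ g : G, g * x * g⁻¹ ∈ Subgroup.centralizer S := by
  intro x hx g
  rw [Subgroup.mem_centralizer_iff] at hx ⊢
  intro z hz
  have hz' := hx _ (hS z hz g)
  calc z * (g * x * g⁻¹) = g * ((g⁻¹ * z * g) * x) * g⁻¹ := by group
    _ = g * (x * (g⁻¹ * z * g)) * g⁻¹ := by rw [hz']
    _ = (g * x * g⁻¹) * z := by group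

end InpAux

theorem statement_0 (G : Type u) [Group G] (hG : IsInpMinimal groupLang G) :
    ∃ H : Subgroup G, H.Normal ∧ (∀ a ∈ H, ∀ b ∈ H, a * b = b * a) ∧
      (∃ φ : groupLang.Formula (Fin 1), ∀ g : G, g ∈ H ↔ φ.Realize (fun _ => g)) ∧
      ∃ n : ℕ, 1 ≤ n ∧ ∀ g : G, g ^ n ∈ H := by
  obtain ⟨n, hn1, hn⟩ := InpAux.uniform_comm hG
  set Spow : Set G := Set.range (fun y : G => y ^ n) with hSpow
  set A : Subgroup G := Subgroup.centralizer Spow with hA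
  have hmemA : ∀ x : G, x ∈ A ↔ ∀ y : G, y ^ n * x = x * y ^ n := by
    intro x
    rw [hA, Subgroup.mem_centralizer_iff]
    constructor
    · intro hx y; exact hx _ ⟨y, rfl⟩
    · rintro hx _ ⟨y, rfl⟩; exact hx y
  have hSconj : ∀ z ∈ Spow, ∀ g : G, g⁻¹ * z * g ∈ Spow := by
    rintro _ ⟨y, rfl⟩ g
    refine ⟨g⁻¹ * y * g, ?_⟩
    have h := conj_pow (a := g⁻¹) (b := y) (i := n)
    rw [inv_inv] at h
    exact h
  have hAconj : ∀ x ∈ A, ∀ g : G, g * x * g⁻¹ ∈ A := InpAux.centralizer_conj hSconj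
  have hCAconj : ∀ x ∈ Subgroup.centralizer (A : Set G), ∀ g : G,
      g * x * g⁻¹ ∈ Subgroup.centralizer (A : Set G) := by
    refine InpAux.centralizer_conj ?_
    intro z hz g
    have h := hAconj z hz g⁻¹
    rwa [inv_inv] at h
  refine ⟨A ⊓ Subgroup.centralizer (A : Set G), ?_, ?_, ?_, n, hn1, ?_⟩
  · constructor
    intro x hx g
    rw [Subgroup.mem_inf] at hx ⊢
    exact ⟨hAconj x hx.1 g, hCAconj x hx.2 g⟩
  · intro a ha b hb
    rw [Subgroup.mem_inf] at ha hb
    exact (ha.2 b hb.1).symm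
  · refine ⟨InpAux.φH n, fun g => ?_⟩
    rw [InpAux.realize_φH, Subgroup.mem_inf]
    constructor
    · rintro ⟨h1, h2⟩
      refine ⟨(hmemA g).1 h1, fun z hz => h2 z ((hmemA z).2 hz)⟩
    · rintro ⟨h1, h2⟩
      refine ⟨(hmemA g).2 h1, ?_⟩
      intro z hz
      exact h2 z ((hmemA z).1 hz)
  · intro g
    rw [Subgroup.mem_inf]
    constructor
    · exact (hmemA _).2 (fun y => hn y g)
    · intro z hz
      exact ((hmemA z).1 hz g).symm
end

section
/- Let L be a first-order language whose symbols are unary and binary relation symbols only (no function or constant symbols), and let M be an L-structure such that: some binary relation symbol is interpreted as a linear order ≤ on M; every binary relation symbol of L is interpreted by a relation R that is monotone with respect to ≤ (x₁ ≤ x, R(x,y) and y ≤ y₁ imply R(x₁, y₁)); every subset of M definable without parameters is the interpretation of some unary relation symbol of L; and every binary relation on M that is definable without parameters and monotone with respect to ≤ is the interpretation of some binary relation symbol of L. Then the complete theory of M eliminates quantifiers: every L-formula with at least one free variable is equivalent, in every model of Th(M), to a quantifier-free L-formula with the same free variables. -/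
open FirstOrder FirstOrder.Language FirstOrder.Language.BoundedFormula

universe u v w

namespace QE4

variable {L : FirstOrder.Language.{v, w}} {M : Type u} [SM : L.Structure M]

/-- conjunction fold -/
lemma foldAnd {α : Type*} {k : ℕ} {ι : Type*} (l : List ι)
    (P : ι → (α → M) → (Fin k → M) → Prop)
    (h : ∀ i ∈ l, ∃ χ : L.BoundedFormula α k, χ.IsQF ∧
      ∀ v xs, χ.Realize v xs ↔ P i v xs) :
    ∃ χ : L.BoundedFormula α k, χ.IsQF ∧
      ∀ v xs, χ.Realize v xs ↔ ∀ i ∈ l, P i v xs := by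
  induction l with
  | nil => exact ⟨⊤, IsQF.top, by simp⟩
  | cons a l ih =>
    obtain ⟨χa, ha, hra⟩ := h a (by simp)
    obtain ⟨χl, hl, hrl⟩ := ih (fun i hi => h i (by simp [hi]))
    refine ⟨χa ⊓ χl, ha.inf hl, fun v xs => ?_⟩
    simp [realize_inf, hra, hrl]

/-- disjunction fold -/
lemma foldOr {α : Type*} {k : ℕ} {ι : Type*} (l : List ι)
    (P : ι → (α → M) → (Fin k → M) → Prop)
    (h : ∀ i ∈ l, ∃ χ : L.BoundedFormula α k, χ.IsQF ∧
      ∀ v xs, χ.Realize v xs ↔ P i v xs) :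
    ∃ χ : L.BoundedFormula α k, χ.IsQF ∧
      ∀ v xs, χ.Realize v xs ↔ ∃ i ∈ l, P i v xs := by
  induction l with
  | nil => exact ⟨⊥, isQF_bot, by simp⟩
  | cons a l ih =>
    obtain ⟨χa, ha, hra⟩ := h a (by simp)
    obtain ⟨χl, hl, hrl⟩ := ih (fun i hi => h i (by simp [hi]))
    refine ⟨χa ⊔ χl, ha.sup hl, fun v xs => ?_⟩
    simp [realize_sup, hra, hrl]

lemma exists_mem_product {ιa ιb : Type*} {l1 : List ιa} {l2 : List ιb} {Q : ιa × ιb → Prop} :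
    (∃ x ∈ l1 ×ˢ l2, Q x) ↔ ∃ i ∈ l1, ∃ j ∈ l2, Q (i, j) := by
  constructor
  · rintro ⟨⟨i, j⟩, hm, h⟩
    rw [List.mem_product] at hm
    exact ⟨i, hm.1, j, hm.2, h⟩
  · rintro ⟨i, hi, j, hj, h⟩
    exact ⟨(i, j), List.mem_product.2 ⟨hi, hj⟩, h⟩

lemma bfrealize_congr {γ : Type*} {φ : L.BoundedFormula γ 0} {v w : γ → M}
    {xs ys : Fin 0 → M} (h : v = w) : φ.Realize v xs ↔ φ.Realize w ys := by
  subst h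
  rw [show xs = ys from funext fun i => i.elim0]

def toBF1 {γ : Type*} (φ : L.Formula γ) (g : γ → (Fin 2) ⊕ (Fin 1)) :
    L.BoundedFormula (Fin 2) 1 :=
  BoundedFormula.relabel g φ

/-- ∃ y, c(y) ∧ u(x₀, y) ∧ d(y, x₁) -/
def wform (c : L.Formula (Fin 1)) (u d : L.Formula (Fin 2)) : L.Formula (Fin 2) :=
  BoundedFormula.ex
    ((toBF1 c (fun _ => Sum.inr 0)) ⊓ (toBF1 u ![Sum.inl 0, Sum.inr 0]) ⊓
      (toBF1 d ![Sum.inr 0, Sum.inl 1]))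

lemma realize_wform (c : L.Formula (Fin 1)) (u d : L.Formula (Fin 2)) (a b : M) :
    (wform c u d).Realize ![a, b] ↔
      ∃ y : M, c.Realize ![y] ∧ u.Realize ![a, y] ∧ d.Realize ![y, b] := by
  simp only [wform, toBF1, Formula.Realize, realize_ex, realize_inf, realize_relabel]
  refine exists_congr fun y => ?_
  rw [and_assoc]
  refine and_congr ?_ (and_congr ?_ ?_) <;>
    · apply bfrealize_congr
      funext i
      fin_cases i <;> simp [Fin.snoc]

/-- ∀ z, p(x₁, z) → u(x₀, z) -/
def inclU (p u : L.Formula (Fin 2)) : L.Formula (Fin 2) :=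
  BoundedFormula.all ((toBF1 p ![Sum.inl 1, Sum.inr 0]).imp (toBF1 u ![Sum.inl 0, Sum.inr 0]))

lemma realize_inclU (p u : L.Formula (Fin 2)) (a a' : M) :
    (inclU p u).Realize ![a, a'] ↔
      ∀ z : M, p.Realize ![a', z] → u.Realize ![a, z] := by
  simp only [inclU, toBF1, Formula.Realize, realize_all, realize_imp, realize_relabel]
  refine forall_congr' fun z => ?_
  refine imp_congr ?_ ?_ <;>
    · apply bfrealize_congr
      funext i
      fin_cases i <;> simp [Fin.snoc]

/-- ∀ z, q(z, x₀) → d(z, x₁) -/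
def inclD (q d : L.Formula (Fin 2)) : L.Formula (Fin 2) :=
  BoundedFormula.all ((toBF1 q ![Sum.inr 0, Sum.inl 0]).imp (toBF1 d ![Sum.inr 0, Sum.inl 1]))

lemma realize_inclD (q d : L.Formula (Fin 2)) (b' b : M) :
    (inclD q d).Realize ![b', b] ↔
      ∀ z : M, q.Realize ![z, b'] → d.Realize ![z, b] := by
  simp only [inclD, toBF1, Formula.Realize, realize_all, realize_imp, realize_relabel]
  refine forall_congr' fun z => ?_
  refine imp_congr ?_ ?_ <;>
    · apply bfrealize_congr
      funext i
      fin_cases i <;> simp [Fin.snoc]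

section Ord

variable [LinearOrder M]

/-- monotone relation -/
def Mono (R : M → M → Prop) : Prop :=
  ∀ x x₁ y y₁ : M, x₁ ≤ x → R x y → y ≤ y₁ → R x₁ y₁

lemma exists_min_up {ι : Type*} (l : List ι) (hne : l ≠ []) (S : ι → M → Prop)
    (hup : ∀ i ∈ l, ∀ y z, S i y → y ≤ z → S i z) :
    ∃ p ∈ l, ∀ i ∈ l, ∀ z, S p z → S i z := by
  induction l with
  | nil => exact absurd rfl hne
  | cons a l ih =>
    rcases eq_or_ne l [] with rfl | hl
    · exact ⟨a, by simp, by simp⟩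
    · obtain ⟨p, hp, hmin⟩ := ih hl (fun i hi => hup i (by simp [hi]))
      by_cases hcmp : ∀ z, S p z → S a z
      · refine ⟨p, by simp [hp], ?_⟩
        rintro i hi z hz
        rcases List.mem_cons.1 hi with rfl | hi
        · exact hcmp z hz
        · exact hmin i hi z hz
      · push_neg at hcmp
        obtain ⟨z, hpz, haz⟩ := hcmp
        refine ⟨a, by simp, ?_⟩
        rintro i hi w hw
        rcases List.mem_cons.1 hi with rfl | hi
        · exact hw
        · rcases le_total z w with h | h
          · exact hmin i hi w (hup p (by simp [hp]) z w hpz h)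
          · exact absurd (hup a (by simp) w z hw h) haz

lemma exists_min_down {ι : Type*} (l : List ι) (hne : l ≠ []) (S : ι → M → Prop)
    (hdown : ∀ i ∈ l, ∀ y z, S i y → z ≤ y → S i z) :
    ∃ p ∈ l, ∀ i ∈ l, ∀ z, S p z → S i z := by
  induction l with
  | nil => exact absurd rfl hne
  | cons a l ih =>
    rcases eq_or_ne l [] with rfl | hl
    · exact ⟨a, by simp, by simp⟩
    · obtain ⟨p, hp, hmin⟩ := ih hl (fun i hi => hdown i (by simp [hi]))
      by_cases hcmp : ∀ z, S p z → S a z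
      · refine ⟨p, by simp [hp], ?_⟩
        rintro i hi z hz
        rcases List.mem_cons.1 hi with rfl | hi
        · exact hcmp z hz
        · exact hmin i hi z hz
      · push_neg at hcmp
        obtain ⟨z, hpz, haz⟩ := hcmp
        refine ⟨a, by simp, ?_⟩
        rintro i hi w hw
        rcases List.mem_cons.1 hi with rfl | hi
        · exact hw
        · rcases le_total z w with h | h
          · exact absurd (hdown a (by simp) w z hw h) haz
          · exact hmin i hi w (hdown p (by simp [hp]) z w hpz h)

lemma order_core {ι κ : Type*} (us : List ι) (ds : List κ)
    (U : ι → M → M → Prop) (aa : ι → M) (D : κ → M → M → Prop) (bb : κ → M)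
    (C : M → Prop)
    (hU : ∀ i ∈ us, Mono (U i)) (hD : ∀ j ∈ ds, Mono (D j))
    (hune : us ≠ []) (hdne : ds ≠ []) :
    (∃ y, C y ∧ (∀ i ∈ us, U i (aa i) y) ∧ (∀ j ∈ ds, D j y (bb j))) ↔
      ∃ i ∈ us, ∃ j ∈ ds,
        (∀ i' ∈ us, ∀ z, U i (aa i) z → U i' (aa i') z) ∧
        (∀ j' ∈ ds, ∀ z, D j z (bb j) → D j' z (bb j')) ∧
        (∃ y, C y ∧ U i (aa i) y ∧ D j y (bb j)) := by
  constructor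
  · rintro ⟨y, hC, hu, hd⟩
    obtain ⟨p, hp, hpmin⟩ := exists_min_up us hune (fun i z => U i (aa i) z)
      (fun i hi y z hy hyz => hU i hi (aa i) (aa i) y z le_rfl hy hyz)
    obtain ⟨q, hq, hqmin⟩ := exists_min_down ds hdne (fun j z => D j z (bb j))
      (fun j hj y z hy hzy => hD j hj y z (bb j) (bb j) hzy hy le_rfl)
    exact ⟨p, hp, q, hq, hpmin, hqmin, y, hC, hu p hp, hd q hq⟩
  · rintro ⟨p, hp, q, hq, hpmin, hqmin, y, hC, hpy, hqy⟩
    exact ⟨y, hC, fun i hi => hpmin i hi y hpy, fun j hj => hqmin j hj y hqy⟩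

/-- monotonicity in the shape of `hmonodef` -/
def FMono (φ : L.Formula (Fin 2)) : Prop :=
  ∀ x x₁ y y₁ : M, x₁ ≤ x → φ.Realize ![x, y] → y ≤ y₁ → φ.Realize ![x₁, y₁]

lemma fmono_top : FMono (M := M) (⊤ : L.Formula (Fin 2)) := by
  intro x x₁ y y₁ _ _ _
  simp [Formula.realize_top]

lemma wform_mono {c : L.Formula (Fin 1)} {u d : L.Formula (Fin 2)}
    (hu : FMono (M := M) u) (hd : FMono (M := M) d) : FMono (M := M) (wform c u d) := by
  intro x x₁ y y₁ hx hw hy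
  rw [realize_wform] at hw ⊢
  obtain ⟨z, hc, huz, hdz⟩ := hw
  exact ⟨z, hc, hu x x₁ z z hx huz le_rfl, hd z z y y₁ le_rfl hdz hy⟩

lemma inclU_mono {p u : L.Formula (Fin 2)} (hp : FMono (M := M) p) (hu : FMono (M := M) u) :
    FMono (M := M) (inclU p u) := by
  intro a a₁ a' a'₁ ha h ha'
  rw [realize_inclU] at h ⊢
  intro z hpz
  exact hu a a₁ z z ha (h z (hp a'₁ a' z z ha' hpz le_rfl)) le_rfl

lemma inclD_mono {q d : L.Formula (Fin 2)} (hq : FMono (M := M) q) (hd : FMono (M := M) d) :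
    FMono (M := M) (inclD q d) := by
  intro b' b'₁ b b₁ hb' h hb
  rw [realize_inclD] at h ⊢
  intro z hqz
  exact hd z z b b₁ le_rfl (h z (hq z z b'₁ b' le_rfl hqz hb')) hb

lemma realize_foldr_inf {γ : Type*} (l : List (L.Formula γ)) (v : γ → M) :
    (l.foldr (· ⊓ ·) ⊤).Realize v ↔ ∀ c ∈ l, c.Realize v := by
  induction l with
  | nil => simp [Formula.realize_top]
  | cons a l ih => simp [Formula.realize_inf, ih]

/-- the core quantifier elimination step: the set of valid `y` is cut out by
unary conditions, up-closed conditions and down-closed conditions. -/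
lemma core {α : Type*} [Nonempty α] {k : ℕ}
    (hmonodef : ∀ φ : L.Formula (Fin 2),
      (∀ x x₁ y y₁ : M, x₁ ≤ x → φ.Realize ![x, y] → y ≤ y₁ → φ.Realize ![x₁, y₁]) →
      ∃ r : L.Relations 2, ∀ x y : M, φ.Realize ![x, y] ↔ Structure.RelMap r ![x, y])
    (cs : List (L.Formula (Fin 1))) (ups downs : List (L.Formula (Fin 2) × (α ⊕ Fin k)))
    (hups : ∀ u ∈ ups, FMono (M := M) u.1) (hdowns : ∀ d ∈ downs, FMono (M := M) d.1) :
    ∃ χ : L.BoundedFormula α k, χ.IsQF ∧ ∀ (v : α → M) (xs : Fin k → M),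
      χ.Realize v xs ↔ ∃ y : M, (∀ c ∈ cs, c.Realize ![y]) ∧
        (∀ u ∈ ups, u.1.Realize ![Sum.elim v xs u.2, y]) ∧
        (∀ d ∈ downs, d.1.Realize ![y, Sum.elim v xs d.2]) := by
  classical
  set Cfm : L.Formula (Fin 1) := cs.foldr (· ⊓ ·) ⊤ with hCfm
  set dum : α ⊕ Fin k := Sum.inl (Classical.arbitrary α) with hdum
  set ups' := ((⊤ : L.Formula (Fin 2)), dum) :: ups with hups'def
  set downs' := ((⊤ : L.Formula (Fin 2)), dum) :: downs with hdowns'def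
  have hups'm : ∀ u ∈ ups', FMono (M := M) u.1 := by
    rintro u hu
    rcases List.mem_cons.1 hu with rfl | hu
    · exact fmono_top
    · exact hups u hu
  have hdowns'm : ∀ d ∈ downs', FMono (M := M) d.1 := by
    rintro d hd
    rcases List.mem_cons.1 hd with rfl | hd
    · exact fmono_top
    · exact hdowns d hd
  have hatomU : ∀ p : L.Formula (Fin 2) × (α ⊕ Fin k), FMono (M := M) p.1 →
      ∀ u ∈ ups', ∃ χ : L.BoundedFormula α k, χ.IsQF ∧
      ∀ (v : α → M) (xs : Fin k → M), χ.Realize v xs ↔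
        ∀ z : M, p.1.Realize ![Sum.elim v xs p.2, z] →
          u.1.Realize ![Sum.elim v xs u.2, z] := by
    intro p hpm u hu
    obtain ⟨s, hs⟩ := hmonodef (inclU p.1 u.1) (inclU_mono hpm (hups'm u hu))
    refine ⟨s.boundedFormula₂ (Term.var u.2) (Term.var p.2),
      (IsAtomic.rel _ _).isQF, fun v xs => ?_⟩
    simp only [realize_rel₂, Term.realize_var]
    rw [← hs, realize_inclU]
  have hatomD : ∀ q : L.Formula (Fin 2) × (α ⊕ Fin k), FMono (M := M) q.1 →
      ∀ d ∈ downs', ∃ χ : L.BoundedFormula α k, χ.IsQF ∧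
      ∀ (v : α → M) (xs : Fin k → M), χ.Realize v xs ↔
        ∀ z : M, q.1.Realize ![z, Sum.elim v xs q.2] →
          d.1.Realize ![z, Sum.elim v xs d.2] := by
    intro q hqm d hd
    obtain ⟨s, hs⟩ := hmonodef (inclD q.1 d.1) (inclD_mono hqm (hdowns'm d hd))
    refine ⟨s.boundedFormula₂ (Term.var q.2) (Term.var d.2),
      (IsAtomic.rel _ _).isQF, fun v xs => ?_⟩
    simp only [realize_rel₂, Term.realize_var]
    rw [← hs, realize_inclD]
  have hpair : ∀ pq ∈ ups' ×ˢ downs', ∃ χ : L.BoundedFormula α k, χ.IsQF ∧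
      ∀ (v : α → M) (xs : Fin k → M), χ.Realize v xs ↔
      ((∀ u ∈ ups', ∀ z : M, pq.1.1.Realize ![Sum.elim v xs pq.1.2, z] →
          u.1.Realize ![Sum.elim v xs u.2, z]) ∧
        (∀ d ∈ downs', ∀ z : M, pq.2.1.Realize ![z, Sum.elim v xs pq.2.2] →
          d.1.Realize ![z, Sum.elim v xs d.2]) ∧
        (∃ y : M, Cfm.Realize ![y] ∧ pq.1.1.Realize ![Sum.elim v xs pq.1.2, y] ∧
          pq.2.1.Realize ![y, Sum.elim v xs pq.2.2])) := by
    rintro ⟨p, q⟩ hm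
    rw [List.mem_product] at hm
    obtain ⟨χ₁, hq₁, hr₁⟩ := foldAnd ups' _ (hatomU p (hups'm p hm.1))
    obtain ⟨χ₂, hq₂, hr₂⟩ := foldAnd downs' _ (hatomD q (hdowns'm q hm.2))
    obtain ⟨t, ht⟩ := hmonodef (wform Cfm p.1 q.1)
      (wform_mono (hups'm p hm.1) (hdowns'm q hm.2))
    refine ⟨χ₁ ⊓ (χ₂ ⊓ t.boundedFormula₂ (Term.var p.2) (Term.var q.2)),
      hq₁.inf (hq₂.inf (IsAtomic.rel _ _).isQF), fun v xs => ?_⟩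
    simp only [realize_inf, hr₁, hr₂, realize_rel₂, Term.realize_var]
    exact and_congr Iff.rfl (and_congr Iff.rfl (by rw [← ht, realize_wform]))
  obtain ⟨χ, hQF, hreal⟩ := foldOr (ups' ×ˢ downs') _ hpair
  refine ⟨χ, hQF, fun v xs => ?_⟩
  have horder := order_core (M := M) ups' downs'
    (fun u a z => u.1.Realize ![a, z]) (fun u => Sum.elim v xs u.2)
    (fun d z b => d.1.Realize ![z, b]) (fun d => Sum.elim v xs d.2)
    (fun y => Cfm.Realize ![y])
    (fun u hu => hups'm u hu) (fun d hd => hdowns'm d hd)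
    (by simp [hups'def]) (by simp [hdowns'def])
  refine ((hreal v xs).trans exists_mem_product).trans (horder.symm.trans ?_)
  refine exists_congr fun y => ?_
  refine and_congr (realize_foldr_inf cs ![y]) (and_congr ?_ ?_)
  · simp only [hups'def, List.forall_mem_cons, Formula.realize_top, true_and]
  · simp only [hdowns'def, List.forall_mem_cons, Formula.realize_top, true_and]


/-- size of a bounded formula, with equalities weighted so that replacing an
equality by a conjunction of two order literals decreases size -/
def mysize : ∀ {m : ℕ}, L.BoundedFormula α m → ℕ
  | _, BoundedFormula.falsum => 1
  | _, BoundedFormula.equal _ _ => 10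
  | _, BoundedFormula.rel _ _ => 1
  | _, BoundedFormula.imp f g => mysize f + mysize g + 1
  | _, BoundedFormula.all f => mysize f + 1

lemma mysize_pos {α : Type*} {m : ℕ} (φ : L.BoundedFormula α m) : 1 ≤ mysize φ := by
  cases φ <;> simp [mysize]

/-- signed realization -/
def SVal {α : Type*} {m : ℕ} (p : L.BoundedFormula α m × Bool) (v : α → M)
    (ys : Fin m → M) : Prop :=
  p.1.Realize v ys ↔ p.2 = true

lemma sval_true {α : Type*} {m : ℕ} (θ : L.BoundedFormula α m) (v : α → M) (ys : Fin m → M) :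
    SVal (θ, true) v ys ↔ θ.Realize v ys := by simp [SVal]

lemma sval_false {α : Type*} {m : ℕ} (θ : L.BoundedFormula α m) (v : α → M) (ys : Fin m → M) :
    SVal (θ, false) v ys ↔ ¬ θ.Realize v ys := by simp [SVal]

/-- optionally negate a formula -/
def sgnF {γ : Type*} (b : Bool) (φ : L.Formula γ) : L.Formula γ := if b then φ else φ.not

lemma realize_sgnF {γ : Type*} (b : Bool) (φ : L.Formula γ) (w : γ → M) :
    (sgnF b φ).Realize w ↔ (φ.Realize w ↔ b = true) := by
  cases b <;> simp [sgnF, Formula.realize_not]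

/-- optionally negate a bounded formula -/
def sgnBF {α : Type*} {m : ℕ} (b : Bool) (φ : L.BoundedFormula α m) : L.BoundedFormula α m :=
  if b then φ else φ.not

lemma sgnBF_isQF {α : Type*} {m : ℕ} {b : Bool} {φ : L.BoundedFormula α m} (h : φ.IsQF) :
    (sgnBF b φ).IsQF := by
  cases b
  · exact h.not
  · exact h

lemma realize_sgnBF {α : Type*} {m : ℕ} (b : Bool) (φ : L.BoundedFormula α m)
    (v : α → M) (xs : Fin m → M) :
    (sgnBF b φ).Realize v xs ↔ (φ.Realize v xs ↔ b = true) := by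
  cases b <;> simp [sgnBF]

/-- push a variable of `α ⊕ Fin (k+1)` other than the last one down -/
noncomputable def downv {α : Type*} [Nonempty α] {k : ℕ} (x : α ⊕ Fin (k + 1)) : α ⊕ Fin k :=
  match x with
  | Sum.inl a => Sum.inl a
  | Sum.inr i =>
    if h : i = Fin.last k then Sum.inl (Classical.arbitrary α) else Sum.inr (i.castPred h)

lemma elim_downv {α : Type*} [Nonempty α] {k : ℕ} {v : α → M} {xs : Fin k → M} {y : M}
    {x : α ⊕ Fin (k + 1)} (h : x ≠ Sum.inr (Fin.last k)) :
    Sum.elim v (Fin.snoc xs y) x = Sum.elim v xs (downv x) := by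
  cases x with
  | inl a => rfl
  | inr i =>
    have hi : i ≠ Fin.last k := fun hh => h (by rw [hh])
    simp only [downv, dif_neg hi, Sum.elim_inr]
    have h2 := Fin.snoc_castSucc (α := fun _ => M) (x := y) (p := xs) (i := i.castPred hi)
    rw [Fin.castSucc_castPred] at h2
    exact h2

lemma relmap_congr {nn : ℕ} {R : L.Relations nn} {f g : Fin nn → M} (h : ∀ i, f i = g i) :
    Structure.RelMap R f ↔ Structure.RelMap R g :=
  iff_of_eq (congrArg _ (funext h))

lemma realize_rel_one {γ : Type*} {m : ℕ} {R : L.Relations 1} {ts : Fin 1 → L.Term (γ ⊕ Fin m)}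
    {v : γ → M} {ys : Fin m → M} :
    (BoundedFormula.rel R ts).Realize v ys ↔
      Structure.RelMap R ![(ts 0).realize (Sum.elim v ys)] := by
  rw [show (BoundedFormula.rel R ts) = R.boundedFormula ts from rfl, realize_rel]
  exact relmap_congr fun i => by fin_cases i <;> rfl

lemma realize_rel_two {γ : Type*} {m : ℕ} {R : L.Relations 2} {ts : Fin 2 → L.Term (γ ⊕ Fin m)}
    {v : γ → M} {ys : Fin m → M} :
    (BoundedFormula.rel R ts).Realize v ys ↔
      Structure.RelMap R ![(ts 0).realize (Sum.elim v ys), (ts 1).realize (Sum.elim v ys)] := by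
  rw [show (BoundedFormula.rel R ts) = R.boundedFormula ts from rfl, realize_rel]
  exact relmap_congr fun i => by fin_cases i <;> rfl

lemma realize_f1 (R : L.Relations 1) (a : M) :
    (R.formula₁ (Term.var 0)).Realize ![a] ↔ Structure.RelMap R ![a] := by
  simp

lemma realize_f2_01 (R : L.Relations 2) (a b : M) :
    (R.formula₂ (Term.var 0) (Term.var 1)).Realize ![a, b] ↔ Structure.RelMap R ![a, b] := by
  simp

lemma realize_f2_10 (R : L.Relations 2) (a b : M) :
    (R.formula₂ (Term.var 1) (Term.var 0)).Realize ![a, b] ↔ Structure.RelMap R ![b, a] := by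
  simp

lemma realize_f2_00 (R : L.Relations 2) (a : M) :
    ((R.formula₂ (Term.var 0) (Term.var 0) : L.Formula (Fin 1))).Realize ![a] ↔
      Structure.RelMap R ![a, a] := by
  simp

section Pend

variable {α : Type*} [Nonempty α] {k : ℕ}

lemma fm_pos (hmono : ∀ (r : L.Relations 2) (x x₁ y y₁ : M), x₁ ≤ x →
      Structure.RelMap r ![x, y] → y ≤ y₁ → Structure.RelMap r ![x₁, y₁])
    (R : L.Relations 2) :
    FMono (M := M) (R.formula₂ (Term.var 0) (Term.var 1)) := by
  intro x x₁ y y₁ hx h hy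
  rw [realize_f2_01] at h ⊢
  exact hmono R x x₁ y y₁ hx h hy

lemma fm_neg (hmono : ∀ (r : L.Relations 2) (x x₁ y y₁ : M), x₁ ≤ x →
      Structure.RelMap r ![x, y] → y ≤ y₁ → Structure.RelMap r ![x₁, y₁])
    (R : L.Relations 2) :
    FMono (M := M) ((R.formula₂ (Term.var 1) (Term.var 0)).not) := by
  intro x x₁ y y₁ hx h hy
  rw [Formula.realize_not, realize_f2_10] at h ⊢
  intro hcon
  exact h (hmono R y₁ y x₁ x hy hcon hx)

end Pend


variable {α : Type*} [Nonempty α] {k : ℕ}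

lemma pendNil
    (hmonodef : ∀ φ : L.Formula (Fin 2),
      (∀ x x₁ y y₁ : M, x₁ ≤ x → φ.Realize ![x, y] → y ≤ y₁ → φ.Realize ![x₁, y₁]) →
      ∃ r : L.Relations 2, ∀ x y : M, φ.Realize ![x, y] ↔ Structure.RelMap r ![x, y])
    (outs : List (L.BoundedFormula α k)) (cs : List (L.Formula (Fin 1)))
    (ups downs : List (L.Formula (Fin 2) × (α ⊕ Fin k)))
    (houts : ∀ o ∈ outs, o.IsQF) (hups : ∀ u ∈ ups, FMono (M := M) u.1)
    (hdowns : ∀ d ∈ downs, FMono (M := M) d.1) :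
    ∃ χ : L.BoundedFormula α k, χ.IsQF ∧ ∀ (v : α → M) (xs : Fin k → M),
      χ.Realize v xs ↔ ∃ y : M,
        (∀ o ∈ outs, o.Realize v xs) ∧ (∀ c ∈ cs, c.Realize ![y]) ∧
        (∀ u ∈ ups, u.1.Realize ![Sum.elim v xs u.2, y]) ∧
        (∀ d ∈ downs, d.1.Realize ![y, Sum.elim v xs d.2]) := by
  obtain ⟨χo, hqo, hro⟩ := foldAnd outs (fun o (v : α → M) (xs : Fin k → M) => o.Realize v xs)
    (fun o ho => ⟨o, houts o ho, fun v xs => Iff.rfl⟩)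
  obtain ⟨χc, hqc, hrc⟩ := core hmonodef cs ups downs hups hdowns
  refine ⟨χo ⊓ χc, hqo.inf hqc, fun v xs => ?_⟩
  rw [realize_inf, hro v xs, hrc v xs]
  constructor
  · rintro ⟨ho, y, h1, h2, h3⟩
    exact ⟨y, ho, h1, h2, h3⟩
  · rintro ⟨y, ho, h1, h2, h3⟩
    exact ⟨ho, y, h1, h2, h3⟩

lemma pend
    (hfun : ∀ n : ℕ, IsEmpty (L.Functions n))
    (hrel : ∀ n : ℕ, n ≠ 1 → n ≠ 2 → IsEmpty (L.Relations n))
    (r₀ : L.Relations 2) (hr₀ : ∀ x y : M, Structure.RelMap r₀ ![x, y] ↔ x ≤ y)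
    (hmono : ∀ (r : L.Relations 2) (x x₁ y y₁ : M), x₁ ≤ x →
      Structure.RelMap r ![x, y] → y ≤ y₁ → Structure.RelMap r ![x₁, y₁])
    (hmonodef : ∀ φ : L.Formula (Fin 2),
      (∀ x x₁ y y₁ : M, x₁ ≤ x → φ.Realize ![x, y] → y ≤ y₁ → φ.Realize ![x₁, y₁]) →
      ∃ r : L.Relations 2, ∀ x y : M, φ.Realize ![x, y] ↔ Structure.RelMap r ![x, y]) :
    ∀ (NB : ℕ) (pending : List (L.BoundedFormula α (k + 1) × Bool)),
      (∀ p ∈ pending, p.1.IsQF) →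
      ((pending.map fun p => mysize p.1).sum ≤ NB) →
      ∀ (outs : List (L.BoundedFormula α k)) (cs : List (L.Formula (Fin 1)))
        (ups downs : List (L.Formula (Fin 2) × (α ⊕ Fin k))),
        (∀ o ∈ outs, o.IsQF) → (∀ u ∈ ups, FMono (M := M) u.1) →
        (∀ d ∈ downs, FMono (M := M) d.1) →
        ∃ χ : L.BoundedFormula α k, χ.IsQF ∧ ∀ (v : α → M) (xs : Fin k → M),
          χ.Realize v xs ↔ ∃ y : M,
            (∀ o ∈ outs, o.Realize v xs) ∧ (∀ c ∈ cs, c.Realize ![y]) ∧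
            (∀ u ∈ ups, u.1.Realize ![Sum.elim v xs u.2, y]) ∧
            (∀ d ∈ downs, d.1.Realize ![y, Sum.elim v xs d.2]) ∧
            (∀ p ∈ pending, SVal p v (Fin.snoc xs y)) := by
  intro NB
  induction NB with
  | zero =>
    intro pending hQF hsz outs cs ups downs houts hups hdowns
    have hnil : pending = [] := by
      cases pending with
      | nil => rfl
      | cons p l =>
        exfalso
        have h1 := mysize_pos p.1
        simp only [List.map_cons, List.sum_cons] at hsz
        omega
    subst hnil
    obtain ⟨χ, hq, hr⟩ := pendNil hmonodef outs cs ups downs houts hups hdowns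
    refine ⟨χ, hq, fun v xs => (hr v xs).trans ?_⟩
    refine exists_congr fun y => ?_
    simp
  | succ NB ih =>
    intro pending hQF hsz outs cs ups downs houts hups hdowns
    cases pending with
    | nil =>
      obtain ⟨χ, hq, hr⟩ := pendNil hmonodef outs cs ups downs houts hups hdowns
      refine ⟨χ, hq, fun v xs => (hr v xs).trans ?_⟩
      refine exists_congr fun y => ?_
      simp
    | cons hd rest =>
      obtain ⟨θ, b⟩ := hd
      simp only [List.map_cons, List.sum_cons] at hsz
      have hθ : θ.IsQF := hQF (θ, b) List.mem_cons_self
      have hrestQF : ∀ p ∈ rest, p.1.IsQF := fun p hp => hQF p (List.mem_cons_of_mem _ hp)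
      cases θ with
      | falsum =>
        cases b with
        | true =>
          refine ⟨⊥, isQF_bot, fun v xs => ?_⟩
          rw [realize_bot]
          constructor
          · exact False.elim
          · rintro ⟨y, -, -, -, -, hpend⟩
            have h := hpend (BoundedFormula.falsum, true) List.mem_cons_self
            rw [sval_true] at h
            exact h
        | false =>
          have hsz' : (rest.map fun p => mysize p.1).sum ≤ NB := by
            have : mysize (BoundedFormula.falsum : L.BoundedFormula α (k + 1)) = 1 := rfl
            omega
          obtain ⟨χ, hq, hr⟩ := ih rest hrestQF hsz' outs cs ups downs houts hups hdowns
          refine ⟨χ, hq, fun v xs => (hr v xs).trans ?_⟩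
          refine exists_congr fun y => ?_
          simp only [List.forall_mem_cons, sval_false]
          have hnf : ¬ (BoundedFormula.falsum : L.BoundedFormula α (k + 1)).Realize v
              (Fin.snoc xs y) := fun h => h
          tauto
      | equal t₁ t₂ =>
        have hesQF : (r₀.boundedFormula₂ t₁ t₂ ⊓ r₀.boundedFormula₂ t₂ t₁ :
            L.BoundedFormula α (k + 1)).IsQF :=
          ((IsAtomic.rel _ _).isQF).inf ((IsAtomic.rel _ _).isQF)
        have hsz' : ((((r₀.boundedFormula₂ t₁ t₂ ⊓ r₀.boundedFormula₂ t₂ t₁ :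
            L.BoundedFormula α (k + 1)), b) :: rest).map fun p => mysize p.1).sum ≤ NB := by
          simp only [List.map_cons, List.sum_cons]
          have h7 : mysize (r₀.boundedFormula₂ t₁ t₂ ⊓ r₀.boundedFormula₂ t₂ t₁ :
              L.BoundedFormula α (k + 1)) = 7 := rfl
          have h10 : mysize (BoundedFormula.equal t₁ t₂ : L.BoundedFormula α (k + 1)) = 10 := rfl
          omega
        have hQF' : ∀ p ∈ (((r₀.boundedFormula₂ t₁ t₂ ⊓ r₀.boundedFormula₂ t₂ t₁ :
            L.BoundedFormula α (k + 1)), b) :: rest), p.1.IsQF := by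
          rintro p hp
          rcases List.mem_cons.1 hp with rfl | hp
          · exact hesQF
          · exact hrestQF p hp
        obtain ⟨χ, hq, hr⟩ := ih _ hQF' hsz' outs cs ups downs houts hups hdowns
        refine ⟨χ, hq, fun v xs => (hr v xs).trans ?_⟩
        refine exists_congr fun y => ?_
        simp only [List.forall_mem_cons]
        have hlink : (r₀.boundedFormula₂ t₁ t₂ ⊓ r₀.boundedFormula₂ t₂ t₁ :
            L.BoundedFormula α (k + 1)).Realize v (Fin.snoc xs y) ↔
            (BoundedFormula.equal t₁ t₂ : L.BoundedFormula α (k + 1)).Realize v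
              (Fin.snoc xs y) := by
          rw [realize_inf, realize_rel₂, realize_rel₂, hr₀, hr₀]
          exact ⟨fun h => le_antisymm h.1 h.2, fun h => ⟨le_of_eq h, ge_of_eq h⟩⟩
        have hsv : SVal ((r₀.boundedFormula₂ t₁ t₂ ⊓ r₀.boundedFormula₂ t₂ t₁ :
            L.BoundedFormula α (k + 1)), b) v (Fin.snoc xs y) ↔
            SVal ((BoundedFormula.equal t₁ t₂ : L.BoundedFormula α (k + 1)), b) v
              (Fin.snoc xs y) := by
          unfold SVal
          rw [hlink]
        tauto
      | imp θ₁ θ₂ =>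
        have hq12 : θ₁.IsQF ∧ θ₂.IsQF := by
          cases hθ with
          | of_isAtomic h => cases h
          | imp h1 h2 => exact ⟨h1, h2⟩
        have hm1 := mysize_pos θ₁
        have hm2 := mysize_pos θ₂
        have hmr : mysize (θ₁.imp θ₂) = mysize θ₁ + mysize θ₂ + 1 := rfl
        cases b with
        | true =>
          have hQF1 : ∀ p ∈ ((θ₁, false) :: rest), p.1.IsQF := by
            rintro p hp
            rcases List.mem_cons.1 hp with rfl | hp
            · exact hq12.1
            · exact hrestQF p hp
          have hQF2 : ∀ p ∈ ((θ₂, true) :: rest), p.1.IsQF := by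
            rintro p hp
            rcases List.mem_cons.1 hp with rfl | hp
            · exact hq12.2
            · exact hrestQF p hp
          have hsz1 : (((θ₁, false) :: rest).map fun p => mysize p.1).sum ≤ NB := by
            simp only [List.map_cons, List.sum_cons]
            omega
          have hsz2 : (((θ₂, true) :: rest).map fun p => mysize p.1).sum ≤ NB := by
            simp only [List.map_cons, List.sum_cons]
            omega
          obtain ⟨χ₁, hq₁, hr₁⟩ := ih _ hQF1 hsz1 outs cs ups downs houts hups hdowns
          obtain ⟨χ₂, hq₂, hr₂⟩ := ih _ hQF2 hsz2 outs cs ups downs houts hups hdowns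
          refine ⟨χ₁ ⊔ χ₂, hq₁.sup hq₂, fun v xs => ?_⟩
          rw [realize_sup, hr₁ v xs, hr₂ v xs]
          constructor
          · rintro (⟨y, hO, hC, hU, hD, hp⟩ | ⟨y, hO, hC, hU, hD, hp⟩) <;>
              rw [List.forall_mem_cons] at hp <;>
              refine ⟨y, hO, hC, hU, hD, List.forall_mem_cons.2 ⟨?_, hp.2⟩⟩
            · have hn : ¬ θ₁.Realize v (Fin.snoc xs y) := (sval_false _ _ _).1 hp.1
              rw [sval_true, realize_imp]
              exact fun h => absurd h hn
            · have hy : θ₂.Realize v (Fin.snoc xs y) := (sval_true _ _ _).1 hp.1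
              rw [sval_true, realize_imp]
              exact fun _ => hy
          · rintro ⟨y, hO, hC, hU, hD, hp⟩
            rw [List.forall_mem_cons] at hp
            have himp : θ₁.Realize v (Fin.snoc xs y) → θ₂.Realize v (Fin.snoc xs y) := by
              have := (sval_true _ _ _).1 hp.1
              rwa [realize_imp] at this
            by_cases hc : θ₁.Realize v (Fin.snoc xs y)
            · exact Or.inr ⟨y, hO, hC, hU, hD,
                List.forall_mem_cons.2 ⟨(sval_true _ _ _).2 (himp hc), hp.2⟩⟩
            · exact Or.inl ⟨y, hO, hC, hU, hD,
                List.forall_mem_cons.2 ⟨(sval_false _ _ _).2 hc, hp.2⟩⟩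
        | false =>
          have hQF' : ∀ p ∈ ((θ₁, true) :: (θ₂, false) :: rest), p.1.IsQF := by
            rintro p hp
            rcases List.mem_cons.1 hp with rfl | hp
            · exact hq12.1
            · rcases List.mem_cons.1 hp with rfl | hp
              · exact hq12.2
              · exact hrestQF p hp
          have hsz' : (((θ₁, true) :: (θ₂, false) :: rest).map fun p => mysize p.1).sum ≤ NB := by
            simp only [List.map_cons, List.sum_cons]
            omega
          obtain ⟨χ, hq, hr⟩ := ih _ hQF' hsz' outs cs ups downs houts hups hdowns
          refine ⟨χ, hq, fun v xs => (hr v xs).trans ?_⟩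
          refine exists_congr fun y => ?_
          simp only [List.forall_mem_cons, sval_true, sval_false, realize_imp]
          tauto
      | all θ' => exact absurd hθ (not_all_isQF θ')
      | @rel _ ℓ R ts =>
        have hszr : (rest.map fun p => mysize p.1).sum ≤ NB := by
          have h1 : mysize (BoundedFormula.rel R ts : L.BoundedFormula α (k + 1)) = 1 := rfl
          omega
        rcases ℓ with _ | _ | _ | ℓ
        · exact ((hrel 0 (by omega) (by omega)).false R).elim
        · -- unary relation
          cases h0 : ts 0 with
          | func f tsf => exact ((hfun _).false f).elim
          | var x0 =>
            have hhead : ∀ (v : α → M) (ys : Fin (k + 1) → M),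
                (BoundedFormula.rel R ts : L.BoundedFormula α (k + 1)).Realize v ys ↔
                  Structure.RelMap R ![Sum.elim v ys x0] := by
              intro v ys
              rw [realize_rel_one, h0]
              rfl
            by_cases hx : x0 = Sum.inr (Fin.last k)
            · subst hx
              obtain ⟨χ, hq, hr⟩ := ih rest hrestQF hszr outs
                ((sgnF b (R.formula₁ (Term.var 0))) :: cs) ups downs houts hups hdowns
              refine ⟨χ, hq, fun v xs => (hr v xs).trans ?_⟩
              refine exists_congr fun y => ?_
              simp only [List.forall_mem_cons]
              have hl : (sgnF b (R.formula₁ (Term.var 0))).Realize ![y] ↔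
                  SVal ((BoundedFormula.rel R ts : L.BoundedFormula α (k + 1)), b) v
                    (Fin.snoc xs y) := by
                rw [realize_sgnF, realize_f1]
                unfold SVal
                rw [hhead v (Fin.snoc xs y)]
                simp
              tauto
            · have houts' : ∀ o ∈ (sgnBF b (R.boundedFormula₁ (Term.var (downv x0))) :: outs),
                  o.IsQF := by
                rintro o ho
                rcases List.mem_cons.1 ho with rfl | ho
                · exact sgnBF_isQF (IsAtomic.rel _ _).isQF
                · exact houts o ho
              obtain ⟨χ, hq, hr⟩ := ih rest hrestQF hszr
                ((sgnBF b (R.boundedFormula₁ (Term.var (downv x0)))) :: outs) cs ups downs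
                houts' hups hdowns
              refine ⟨χ, hq, fun v xs => (hr v xs).trans ?_⟩
              refine exists_congr fun y => ?_
              simp only [List.forall_mem_cons]
              have hl : (sgnBF b (R.boundedFormula₁ (Term.var (downv x0)))).Realize v xs ↔
                  SVal ((BoundedFormula.rel R ts : L.BoundedFormula α (k + 1)), b) v
                    (Fin.snoc xs y) := by
                rw [realize_sgnBF]
                unfold SVal
                rw [hhead v (Fin.snoc xs y), elim_downv hx]
                simp [Term.realize]
              tauto
        · -- binary relation
          cases h0 : ts 0 with
          | func f tsf => exact ((hfun _).false f).elim
          | var x0 =>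
            cases h1 : ts 1 with
            | func f tsf => exact ((hfun _).false f).elim
            | var x1 =>
              have hhead : ∀ (v : α → M) (ys : Fin (k + 1) → M),
                  (BoundedFormula.rel R ts : L.BoundedFormula α (k + 1)).Realize v ys ↔
                    Structure.RelMap R ![Sum.elim v ys x0, Sum.elim v ys x1] := by
                intro v ys
                rw [realize_rel_two, h0, h1]
                rfl
              by_cases hx0 : x0 = Sum.inr (Fin.last k)
              · by_cases hx1 : x1 = Sum.inr (Fin.last k)
                · -- R(y, y): unary condition
                  subst hx0
                  subst hx1
                  obtain ⟨χ, hq, hr⟩ := ih rest hrestQF hszr outs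
                    ((sgnF b (R.formula₂ (Term.var 0) (Term.var 0))) :: cs) ups downs
                    houts hups hdowns
                  refine ⟨χ, hq, fun v xs => (hr v xs).trans ?_⟩
                  refine exists_congr fun y => ?_
                  simp only [List.forall_mem_cons]
                  have hl : (sgnF b (R.formula₂ (Term.var 0) (Term.var 0))).Realize ![y] ↔
                      SVal ((BoundedFormula.rel R ts : L.BoundedFormula α (k + 1)), b) v
                        (Fin.snoc xs y) := by
                    rw [realize_sgnF, realize_f2_00]
                    unfold SVal
                    rw [hhead v (Fin.snoc xs y)]
                    simp
                  tauto
                · -- R(y, t): down condition if positive, up condition if negative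
                  subst hx0
                  cases b with
                  | true =>
                    have hdowns' : ∀ d ∈ ((R.formula₂ (Term.var 0) (Term.var 1), downv x1) ::
                        downs), FMono (M := M) d.1 := by
                      rintro d hd
                      rcases List.mem_cons.1 hd with rfl | hd
                      · exact fm_pos hmono R
                      · exact hdowns d hd
                    obtain ⟨χ, hq, hr⟩ := ih rest hrestQF hszr outs cs ups
                      ((R.formula₂ (Term.var 0) (Term.var 1), downv x1) :: downs)
                      houts hups hdowns'
                    refine ⟨χ, hq, fun v xs => (hr v xs).trans ?_⟩
                    refine exists_congr fun y => ?_
                    simp only [List.forall_mem_cons, sval_true]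
                    have hl : (R.formula₂ (Term.var 0) (Term.var 1) : L.Formula (Fin 2)).Realize
                        ![y, Sum.elim v xs (downv x1)] ↔
                        (BoundedFormula.rel R ts : L.BoundedFormula α (k + 1)).Realize v
                          (Fin.snoc xs y) := by
                      rw [realize_f2_01, hhead v (Fin.snoc xs y), elim_downv hx1]
                      simp
                    tauto
                  | false =>
                    have hups' : ∀ u ∈ (((R.formula₂ (Term.var 1) (Term.var 0)).not, downv x1) ::
                        ups), FMono (M := M) u.1 := by
                      rintro u hu
                      rcases List.mem_cons.1 hu with rfl | hu
                      · exact fm_neg hmono R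
                      · exact hups u hu
                    obtain ⟨χ, hq, hr⟩ := ih rest hrestQF hszr outs cs
                      (((R.formula₂ (Term.var 1) (Term.var 0)).not, downv x1) :: ups) downs
                      houts hups' hdowns
                    refine ⟨χ, hq, fun v xs => (hr v xs).trans ?_⟩
                    refine exists_congr fun y => ?_
                    simp only [List.forall_mem_cons, sval_false]
                    have hl : ((R.formula₂ (Term.var 1) (Term.var 0)).not : L.Formula
                        (Fin 2)).Realize ![Sum.elim v xs (downv x1), y] ↔
                        ¬ (BoundedFormula.rel R ts : L.BoundedFormula α (k + 1)).Realize v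
                          (Fin.snoc xs y) := by
                      rw [Formula.realize_not, realize_f2_10, hhead v (Fin.snoc xs y),
                        elim_downv hx1]
                      simp
                    tauto
              · by_cases hx1 : x1 = Sum.inr (Fin.last k)
                · -- R(t, y): up condition if positive, down condition if negative
                  subst hx1
                  cases b with
                  | true =>
                    have hups' : ∀ u ∈ ((R.formula₂ (Term.var 0) (Term.var 1), downv x0) ::
                        ups), FMono (M := M) u.1 := by
                      rintro u hu
                      rcases List.mem_cons.1 hu with rfl | hu
                      · exact fm_pos hmono R
                      · exact hups u hu
                    obtain ⟨χ, hq, hr⟩ := ih rest hrestQF hszr outs cs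
                      ((R.formula₂ (Term.var 0) (Term.var 1), downv x0) :: ups) downs
                      houts hups' hdowns
                    refine ⟨χ, hq, fun v xs => (hr v xs).trans ?_⟩
                    refine exists_congr fun y => ?_
                    simp only [List.forall_mem_cons, sval_true]
                    have hl : (R.formula₂ (Term.var 0) (Term.var 1) : L.Formula (Fin 2)).Realize
                        ![Sum.elim v xs (downv x0), y] ↔
                        (BoundedFormula.rel R ts : L.BoundedFormula α (k + 1)).Realize v
                          (Fin.snoc xs y) := by
                      rw [realize_f2_01, hhead v (Fin.snoc xs y), elim_downv hx0]
                      simp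
                    tauto
                  | false =>
                    have hdowns' : ∀ d ∈ (((R.formula₂ (Term.var 1) (Term.var 0)).not, downv x0)
                        :: downs), FMono (M := M) d.1 := by
                      rintro d hd
                      rcases List.mem_cons.1 hd with rfl | hd
                      · exact fm_neg hmono R
                      · exact hdowns d hd
                    obtain ⟨χ, hq, hr⟩ := ih rest hrestQF hszr outs cs ups
                      (((R.formula₂ (Term.var 1) (Term.var 0)).not, downv x0) :: downs)
                      houts hups hdowns'
                    refine ⟨χ, hq, fun v xs => (hr v xs).trans ?_⟩
                    refine exists_congr fun y => ?_
                    simp only [List.forall_mem_cons, sval_false]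
                    have hl : ((R.formula₂ (Term.var 1) (Term.var 0)).not : L.Formula
                        (Fin 2)).Realize ![y, Sum.elim v xs (downv x0)] ↔
                        ¬ (BoundedFormula.rel R ts : L.BoundedFormula α (k + 1)).Realize v
                          (Fin.snoc xs y) := by
                      rw [Formula.realize_not, realize_f2_10, hhead v (Fin.snoc xs y),
                        elim_downv hx0]
                      simp
                    tauto
                · -- neither variable is the quantified one
                  have houts' : ∀ o ∈ (sgnBF b (R.boundedFormula₂ (Term.var (downv x0))
                      (Term.var (downv x1))) :: outs), o.IsQF := by
                    rintro o ho
                    rcases List.mem_cons.1 ho with rfl | ho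
                    · exact sgnBF_isQF (IsAtomic.rel _ _).isQF
                    · exact houts o ho
                  obtain ⟨χ, hq, hr⟩ := ih rest hrestQF hszr
                    ((sgnBF b (R.boundedFormula₂ (Term.var (downv x0))
                      (Term.var (downv x1)))) :: outs) cs ups downs houts' hups hdowns
                  refine ⟨χ, hq, fun v xs => (hr v xs).trans ?_⟩
                  refine exists_congr fun y => ?_
                  simp only [List.forall_mem_cons]
                  have hl : (sgnBF b (R.boundedFormula₂ (Term.var (downv x0))
                      (Term.var (downv x1)))).Realize v xs ↔
                      SVal ((BoundedFormula.rel R ts : L.BoundedFormula α (k + 1)), b) v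
                        (Fin.snoc xs y) := by
                    rw [realize_sgnBF]
                    unfold SVal
                    rw [hhead v (Fin.snoc xs y), elim_downv hx0, elim_downv hx1]
                    simp [Term.realize]
                  tauto
        · exact ((hrel _ (by omega) (by omega)).false R).elim


lemma exelim
    (hfun : ∀ n : ℕ, IsEmpty (L.Functions n))
    (hrel : ∀ n : ℕ, n ≠ 1 → n ≠ 2 → IsEmpty (L.Relations n))
    (r₀ : L.Relations 2) (hr₀ : ∀ x y : M, Structure.RelMap r₀ ![x, y] ↔ x ≤ y)
    (hmono : ∀ (r : L.Relations 2) (x x₁ y y₁ : M), x₁ ≤ x →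
      Structure.RelMap r ![x, y] → y ≤ y₁ → Structure.RelMap r ![x₁, y₁])
    (hmonodef : ∀ φ : L.Formula (Fin 2),
      (∀ x x₁ y y₁ : M, x₁ ≤ x → φ.Realize ![x, y] → y ≤ y₁ → φ.Realize ![x₁, y₁]) →
      ∃ r : L.Relations 2, ∀ x y : M, φ.Realize ![x, y] ↔ Structure.RelMap r ![x, y])
    (θ : L.BoundedFormula α (k + 1)) (hθ : θ.IsQF) :
    ∃ χ : L.BoundedFormula α k, χ.IsQF ∧ ∀ (v : α → M) (xs : Fin k → M),
      χ.Realize v xs ↔ ∃ y : M, θ.Realize v (Fin.snoc xs y) := by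
  obtain ⟨χ, hq, hr⟩ := pend hfun hrel r₀ hr₀ hmono hmonodef (mysize θ) [(θ, true)]
    (by
      rintro p hp
      rcases List.mem_cons.1 hp with rfl | hp
      · exact hθ
      · simp at hp)
    (by simp) [] [] [] [] (by simp) (by simp) (by simp)
  refine ⟨χ, hq, fun v xs => (hr v xs).trans ?_⟩
  refine exists_congr fun y => ?_
  simp [sval_true]

lemma mainQE
    (hfun : ∀ n : ℕ, IsEmpty (L.Functions n))
    (hrel : ∀ n : ℕ, n ≠ 1 → n ≠ 2 → IsEmpty (L.Relations n))
    (r₀ : L.Relations 2) (hr₀ : ∀ x y : M, Structure.RelMap r₀ ![x, y] ↔ x ≤ y)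
    (hmono : ∀ (r : L.Relations 2) (x x₁ y y₁ : M), x₁ ≤ x →
      Structure.RelMap r ![x, y] → y ≤ y₁ → Structure.RelMap r ![x₁, y₁])
    (hmonodef : ∀ φ : L.Formula (Fin 2),
      (∀ x x₁ y y₁ : M, x₁ ≤ x → φ.Realize ![x, y] → y ≤ y₁ → φ.Realize ![x₁, y₁]) →
      ∃ r : L.Relations 2, ∀ x y : M, φ.Realize ![x, y] ↔ Structure.RelMap r ![x, y])
    {m : ℕ} (φ : L.BoundedFormula α m) :
    ∃ ψ : L.BoundedFormula α m, ψ.IsQF ∧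
      ∀ (v : α → M) (xs : Fin m → M), φ.Realize v xs ↔ ψ.Realize v xs := by
  induction φ with
  | falsum => exact ⟨⊥, isQF_bot, fun v xs => Iff.rfl⟩
  | equal t₁ t₂ => exact ⟨BoundedFormula.equal t₁ t₂, (IsAtomic.equal t₁ t₂).isQF,
      fun v xs => Iff.rfl⟩
  | rel R ts => exact ⟨BoundedFormula.rel R ts, (IsAtomic.rel R ts).isQF, fun v xs => Iff.rfl⟩
  | imp f g ihf ihg =>
    obtain ⟨ψ₁, h₁, hr₁⟩ := ihf
    obtain ⟨ψ₂, h₂, hr₂⟩ := ihg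
    refine ⟨ψ₁.imp ψ₂, h₁.imp h₂, fun v xs => ?_⟩
    rw [realize_imp, realize_imp, hr₁ v xs, hr₂ v xs]
  | all f ihf =>
    obtain ⟨ψ, hq, hr⟩ := ihf
    obtain ⟨χ, hqχ, hrχ⟩ := exelim hfun hrel r₀ hr₀ hmono hmonodef ψ.not hq.not
    refine ⟨χ.not, hqχ.not, fun v xs => ?_⟩
    rw [realize_all, realize_not, hrχ v xs]
    constructor
    · rintro h ⟨y, hy⟩
      rw [realize_not] at hy
      exact hy ((hr v (Fin.snoc xs y)).1 (h y))
    · intro h a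
      by_contra hc
      exact h ⟨a, realize_not.2 fun hpsi => hc ((hr v (Fin.snoc xs a)).2 hpsi)⟩

end Ord

end QE4


theorem statement_4 (L : FirstOrder.Language.{v, w}) (M : Type u) [SM : L.Structure M]
    [LinearOrder M]
    -- the symbols of `L` are unary and binary relation symbols only
    (hfun : ∀ n : ℕ, IsEmpty (L.Functions n))
    (hrel : ∀ n : ℕ, n ≠ 1 → n ≠ 2 → IsEmpty (L.Relations n))
    -- some binary relation symbol is interpreted as the linear order `≤`
    (r₀ : L.Relations 2) (hr₀ : ∀ x y : M, Structure.RelMap r₀ ![x, y] ↔ x ≤ y)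
    -- every binary relation symbol is interpreted by a monotone relation
    (hmono : ∀ (r : L.Relations 2) (x x₁ y y₁ : M), x₁ ≤ x →
      Structure.RelMap r ![x, y] → y ≤ y₁ → Structure.RelMap r ![x₁, y₁])
    -- every `∅`-definable subset is the interpretation of a unary relation symbol
    (hcolor : ∀ φ : L.Formula (Fin 1), ∃ c : L.Relations 1,
      ∀ x : M, φ.Realize (fun _ => x) ↔ Structure.RelMap c ![x])
    -- every `∅`-definable monotone binary relation is the interpretation of a binary symbol
    (hmonodef : ∀ φ : L.Formula (Fin 2),
      (∀ x x₁ y y₁ : M, x₁ ≤ x → φ.Realize ![x, y] → y ≤ y₁ → φ.Realize ![x₁, y₁]) →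
      ∃ r : L.Relations 2, ∀ x y : M, φ.Realize ![x, y] ↔ Structure.RelMap r ![x, y]) :
    -- then `Th(M)` eliminates quantifiers
    ∀ (n : ℕ) (φ : L.Formula (Fin (n + 1))), ∃ ψ : L.Formula (Fin (n + 1)),
      ψ.IsQF ∧ ∀ (N : Type (max u v w)) (SN : L.Structure N),
        @Theory.Model L N SN (L.completeTheory M) →
        ∀ v : Fin (n + 1) → N,
          @Formula.Realize L N SN _ φ v ↔ @Formula.Realize L N SN _ ψ v := by
  intro n φ
  obtain ⟨ψ, hq, hr⟩ := QE4.mainQE (M := M) hfun hrel r₀ hr₀ hmono hmonodef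
    (φ : L.BoundedFormula (Fin (n + 1)) 0)
  refine ⟨ψ, hq, ?_⟩
  intro N SN hN v
  haveI : N ⊨ L.completeTheory M := hN
  have hMσ : M ⊨ (Formula.iAlls (Fin (n + 1)) ((φ.iff ψ).relabel (Sum.inr : Fin (n + 1) → Empty ⊕ Fin (n + 1)))) := by
    have : (Formula.iAlls (Fin (n + 1)) ((φ.iff ψ).relabel
        (Sum.inr : Fin (n + 1) → Empty ⊕ Fin (n + 1)))).Realize (default : Empty → M) := by
      rw [Formula.realize_iAlls]
      intro i
      rw [Formula.realize_relabel, Formula.realize_iff]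
      exact hr _ default
    exact this
  have hσmem : Formula.iAlls (Fin (n + 1)) ((φ.iff ψ).relabel (Sum.inr : Fin (n + 1) → Empty ⊕ Fin (n + 1))) ∈
      L.completeTheory M := mem_completeTheory.2 hMσ
  have hNσ : N ⊨ (Formula.iAlls (Fin (n + 1)) ((φ.iff ψ).relabel (Sum.inr : Fin (n + 1) → Empty ⊕ Fin (n + 1)))) :=
    (L.completeTheory M).realize_sentence_of_mem hσmem
  have hN' : Formula.Realize (M := N) (φ.iff ψ) v := by
    have h2 : (Formula.iAlls (Fin (n + 1)) ((φ.iff ψ).relabel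
        (Sum.inr : Fin (n + 1) → Empty ⊕ Fin (n + 1)))).Realize (default : Empty → N) := hNσ
    rw [Formula.realize_iAlls] at h2
    exact (Formula.realize_relabel (g := (Sum.inr : Fin (n + 1) → Empty ⊕ Fin (n + 1)))).1 (h2 v)
  exact Formula.realize_iff.1 hN'
end

section
/- Let (T, ≤) be a tree, regarded as a structure in the language {≤}. Let a ∈ T and let D = {x ∈ T : a ≤ x} be the closed ball of center a. Let x̄ and x̄′ be n-tuples of elements of T ∖ D, and let ȳ and ȳ′ be m-tuples of elements of D, such that the (n+1)-tuples (x̄, a) and (x̄′, a) have the same type and the (m+1)-tuples (ȳ, a) and (ȳ′, a) have the same type. Then the (n+m+1)-tuples (x̄, ȳ, a) and (x̄′, ȳ′, a) have the same type. -/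
open FirstOrder FirstOrder.Language

universe u

/-- Any type with `≤`, regarded as a structure in the language `{≤}`. -/
instance (priority := low) orderStruc (T : Type u) [LE T] : Language.order.Structure T :=
  Language.orderStructure T

namespace TreeFV

instance ordStruc (T : Type u) [LE T] : Language.order.OrderedStructure T :=
  ⟨fun _ => Iff.rfl⟩

lemma term_var {γ : Type*} (t : Language.order.Term γ) : ∃ g, t = Term.var g := by
  cases t with
  | var g => exact ⟨g, rfl⟩
  | func f ts => exact isEmptyElim f

section DNF

variable {L : Language} {M : Type u} [L.Structure M] {γ : Type}

lemma realize_iInf_not {I : Type} (s : Finset I) (H : I → L.Formula γ) (v : γ → M) :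
    Formula.Realize (BoundedFormula.iInf (fun i : s => (H i.1).not)) v ↔
      ∀ i ∈ s, ¬ (H i).Realize v := by
  have h := BoundedFormula.realize_iInf (f := fun i : s => (H i.1).not) (v := v)
    (v' := (default : Fin 0 → M))
  simp only [BoundedFormula.realize_not, Subtype.forall] at h
  exact h

lemma dnf_not {I : Type} [Fintype I] (F G : I → L.Formula γ) :
    ∃ (J : Type) (_ : Fintype J) (F' G' : J → L.Formula γ),
      ∀ (vA vB : γ → M),
        ((¬ ∃ i, (F i).Realize vA ∧ (G i).Realize vB) ↔
          ∃ j, (F' j).Realize vA ∧ (G' j).Realize vB) := by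
  classical
  refine ⟨I → Bool, inferInstance,
    fun f => BoundedFormula.iInf
      (fun i : (Finset.univ.filter fun i => f i = true) => (F i.1).not),
    fun f => BoundedFormula.iInf
      (fun i : (Finset.univ.filter fun i => f i = false) => (G i.1).not),
    fun vA vB => ?_⟩
  constructor
  · intro h
    refine ⟨fun i => decide (¬ (F i).Realize vA), ?_, ?_⟩
    · rw [realize_iInf_not]
      intro i hi
      simp only [Finset.mem_filter, Finset.mem_univ, true_and] at hi
      exact of_decide_eq_true hi
    · rw [realize_iInf_not]
      intro i hi
      simp only [Finset.mem_filter, Finset.mem_univ, true_and] at hi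
      have hF : (F i).Realize vA := not_not.mp (of_decide_eq_false hi)
      exact fun hG => h ⟨i, hF, hG⟩
  · rintro ⟨f, hF, hG⟩ ⟨i, hFi, hGi⟩
    rw [realize_iInf_not] at hF hG
    cases hf : f i
    · exact hG i (by simp [hf]) hGi
    · exact hF i (by simp [hf]) hFi

end DNF

section Cross
variable {T : Type u} [SemilatticeInf T]

lemma cross_le (htree : ∀ x y z : T, y ≤ x → z ≤ x → y ≤ z ∨ z ≤ y) {a u v : T}
    (hu : ¬ a ≤ u) (hv : a ≤ v) : u ≤ v ↔ u ≤ a := by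
  constructor
  · intro h
    rcases htree v u a h hv with h' | h'
    · exact h'
    · exact absurd h' hu
  · exact fun h => h.trans hv

lemma cross_not_le {a u v : T} (hu : ¬ a ≤ u) (hv : a ≤ v) : ¬ v ≤ u :=
  fun h => hu (hv.trans h)

lemma cross_ne {a u v : T} (hu : ¬ a ≤ u) (hv : a ≤ v) : u ≠ v :=
  fun h => hu (h ▸ hv)

end Cross

def proj {T : Type u} (a : T) {γ : Type} (s : γ → Bool) (c : Bool) (w : γ → T) :
    γ ⊕ Unit → T :=
  Sum.elim (fun g => if s g = c then w g else a) (fun _ => a)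

def extS {β : Type} {k : ℕ} (s : β ⊕ Fin k → Bool) (b : Bool) : β ⊕ Fin (k+1) → Bool :=
  Sum.elim (fun x => s (.inl x)) (Fin.snoc (fun i => s (.inr i)) b)

def lift1 {β : Type} {k : ℕ} : (β ⊕ Fin (k+1)) ⊕ Unit → ((β ⊕ Fin k) ⊕ Unit) ⊕ Fin 1 :=
  Sum.elim
    (Sum.elim (fun b => .inl (.inl (.inl b)))
      (fun i => Fin.lastCases (motive := fun _ => ((β ⊕ Fin k) ⊕ Unit) ⊕ Fin 1)
        (.inr 0) (fun j => .inl (.inl (.inr j))) i))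
    (fun _ => .inl (.inr ()))

def drop1 {β : Type} {k : ℕ} : (β ⊕ Fin (k+1)) ⊕ Unit → (β ⊕ Fin k) ⊕ Unit :=
  Sum.elim
    (Sum.elim (fun b => .inl (.inl b))
      (fun i => Fin.lastCases (motive := fun _ => (β ⊕ Fin k) ⊕ Unit)
        (.inr ()) (fun j => .inl (.inr j)) i))
    (fun _ => .inr ())

section ProjLemmas
variable {T : Type u} [LE T] (a : T) {β : Type} {k : ℕ} (s : β ⊕ Fin k → Bool) (b : Bool)
  (v : β → T) (xs : Fin k → T) (t : T)

set_option linter.unusedSectionVars false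

lemma proj_ext_same :
    proj a (extS s b) b (Sum.elim v (Fin.snoc xs t)) =
      Sum.elim (proj a s b (Sum.elim v xs)) (fun _ : Fin 1 => t) ∘ lift1 := by
  funext g
  rcases g with (g | i) | u
  · simp [proj, extS, lift1]; congr
  · induction i using Fin.lastCases with
    | last => simp [proj, extS, lift1]
    | cast j => simp [proj, extS, lift1]
  · simp [proj, extS, lift1]

lemma proj_ext_other :
    proj a (extS s b) (!b) (Sum.elim v (Fin.snoc xs t)) =
      proj a s (!b) (Sum.elim v xs) ∘ drop1 := by
  funext g
  rcases g with (g | i) | u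
  · simp [proj, extS, drop1]; congr
  · induction i using Fin.lastCases with
    | last => simp [proj, extS, drop1]
    | cast j => simp [proj, extS, drop1]
  · simp [proj, extS, drop1]

lemma extS_cond_false (hA : ∀ g, s g = false → ¬ a ≤ Sum.elim v xs g)
    (hb : b = false → ¬ a ≤ t) :
    ∀ g, extS s b g = false → ¬ a ≤ Sum.elim v (Fin.snoc xs t) g := by
  rintro (g | i) hg
  · exact hA (.inl g) hg
  · induction i using Fin.lastCases with
    | last =>
      simp only [extS, Sum.elim_inr, Fin.snoc_last] at hg
      simpa [Fin.snoc_last] using hb hg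
    | cast j =>
      simp only [extS, Sum.elim_inr, Fin.snoc_castSucc] at hg
      simpa [Fin.snoc_castSucc] using hA (.inr j) hg

lemma extS_cond_true (hB : ∀ g, s g = true → a ≤ Sum.elim v xs g)
    (hb : b = true → a ≤ t) :
    ∀ g, extS s b g = true → a ≤ Sum.elim v (Fin.snoc xs t) g := by
  rintro (g | i) hg
  · exact hB (.inl g) hg
  · induction i using Fin.lastCases with
    | last =>
      simp only [extS, Sum.elim_inr, Fin.snoc_last] at hg
      simpa [Fin.snoc_last] using hb hg
    | cast j =>
      simp only [extS, Sum.elim_inr, Fin.snoc_castSucc] at hg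
      simpa [Fin.snoc_castSucc] using hB (.inr j) hg

end ProjLemmas

def guardT {β : Type} {k : ℕ} (b : Bool) : Language.order.BoundedFormula ((β ⊕ Fin k) ⊕ Unit) 1 :=
  if b then
    Term.le (Term.var (Sum.inl (Sum.inr ()))) (Term.var (Sum.inr 0))
  else
    ∼(Term.le (Term.var (Sum.inl (Sum.inr ()))) (Term.var (Sum.inr 0)))

section Realizers
variable {T : Type u} [SemilatticeInf T]

lemma realize_fin0 {α : Type} (φ : Language.order.Formula α) (v : α → T) (xs : Fin 0 → T) :
    BoundedFormula.Realize φ v xs ↔ Formula.Realize φ v := by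
  rw [Subsingleton.elim xs (default : Fin 0 → T)]
  exact Iff.rfl

lemma realize_guard_ex (a : T) {β : Type} {k : ℕ} (s : β ⊕ Fin k → Bool) (b : Bool)
    (ψ : Language.order.Formula ((β ⊕ Fin (k+1)) ⊕ Unit)) (v : β → T) (xs : Fin k → T) :
    Formula.Realize ((guardT b ⊓ BoundedFormula.relabel lift1 ψ).ex) (proj a s b (Sum.elim v xs)) ↔
      ∃ t : T, (if b then a ≤ t else ¬ a ≤ t) ∧
        ψ.Realize (proj a (extS s b) b (Sum.elim v (Fin.snoc xs t))) := by
  have h0 : Formula.Realize ((guardT b ⊓ BoundedFormula.relabel lift1 ψ).ex) (proj a s b (Sum.elim v xs)) ↔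
      ∃ t : T, (guardT b ⊓ BoundedFormula.relabel lift1 ψ).Realize (proj a s b (Sum.elim v xs))
        (Fin.snoc default t) :=
    BoundedFormula.realize_ex
  rw [h0]
  refine exists_congr fun t => ?_
  rw [BoundedFormula.realize_inf, BoundedFormula.realize_relabel]
  have hguard : (guardT b).Realize (proj a s b (Sum.elim v xs)) (Fin.snoc default t) ↔
      (if b then a ≤ t else ¬ a ≤ t) := by
    cases b <;>
      simp [guardT, BoundedFormula.realize_not, proj, Fin.snoc]
  rw [hguard]
  refine and_congr_right fun _ => ?_
  rw [realize_fin0]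
  have harg : (Sum.elim (proj a s b (Sum.elim v xs))
        ((Fin.snoc default t : Fin 1 → T) ∘ Fin.castAdd 0) ∘ lift1) =
      proj a (extS s b) b (Sum.elim v (Fin.snoc xs t)) := by
    rw [proj_ext_same]
    congr 1
  rw [harg]

lemma realize_drop (a : T) {β : Type} {k : ℕ} (s : β ⊕ Fin k → Bool) (b : Bool)
    (ψ : Language.order.Formula ((β ⊕ Fin (k+1)) ⊕ Unit)) (v : β → T) (xs : Fin k → T) (t : T) :
    Formula.Realize (ψ.relabel drop1) (proj a s (!b) (Sum.elim v xs)) ↔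
      ψ.Realize (proj a (extS s b) (!b) (Sum.elim v (Fin.snoc xs t))) := by
  rw [Formula.realize_relabel, ← proj_ext_other]

lemma realize_var_eq {α : Type} (g h : α) (v : α → T) :
    Formula.Realize (Term.bdEqual (Term.var (Sum.inl g)) (Term.var (Sum.inl h)) :
      Language.order.Formula α) v ↔ v g = v h :=
  BoundedFormula.realize_bdEqual _ _

lemma realize_var_le {α : Type} (g h : α) (v : α → T) :
    Formula.Realize (Term.le (Term.var (Sum.inl g)) (Term.var (Sum.inl h)) :
      Language.order.Formula α) v ↔ v g ≤ v h :=
  Term.realize_le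

end Realizers

theorem main {T : Type u} [SemilatticeInf T]
    (htree : ∀ x y z : T, y ≤ x → z ≤ x → y ≤ z ∨ z ≤ y) (a : T)
    {β : Type} : ∀ {k : ℕ} (φ : Language.order.BoundedFormula β k)
    (s : β ⊕ Fin k → Bool),
    ∃ (I : Type) (_ : Fintype I)
      (F G : I → Language.order.Formula ((β ⊕ Fin k) ⊕ Unit)),
      ∀ (v : β → T) (xs : Fin k → T),
        (∀ g, s g = false → ¬ a ≤ Sum.elim v xs g) →
        (∀ g, s g = true → a ≤ Sum.elim v xs g) →
        (φ.Realize v xs ↔ ∃ i,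
          (F i).Realize (proj a s false (Sum.elim v xs)) ∧
          (G i).Realize (proj a s true (Sum.elim v xs))) := by
  intro k φ
  induction φ with
  | falsum =>
    intro s
    exact ⟨PEmpty, inferInstance, fun i => i.elim, fun i => i.elim, fun v xs _ _ =>
      ⟨fun h => h.elim, fun ⟨i, _⟩ => i.elim⟩⟩
  | equal t₁ t₂ =>
    intro s
    obtain ⟨g, rfl⟩ := term_var t₁
    obtain ⟨h, rfl⟩ := term_var t₂
    cases hsg : s g <;> cases hsh : s h
    · -- both on the `false` side
      refine ⟨Unit, inferInstance,
        fun _ => Term.bdEqual (Term.var (Sum.inl (Sum.inl g))) (Term.var (Sum.inl (Sum.inl h))),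
        fun _ => ⊤, fun v xs hA hB => ?_⟩
      refine Iff.trans (BoundedFormula.realize_bdEqual (Term.var g) (Term.var h)) ?_
      simp [realize_var_eq, proj, hsg, hsh]
    · -- cross: never equal
      refine ⟨PEmpty, inferInstance, fun i => i.elim, fun i => i.elim, fun v xs hA hB => ?_⟩
      constructor
      · intro heq
        exact absurd ((BoundedFormula.realize_bdEqual (Term.var g) (Term.var h)).mp heq)
          (cross_ne (hA g hsg) (hB h hsh))
      · rintro ⟨i, -⟩; exact i.elim
    · refine ⟨PEmpty, inferInstance, fun i => i.elim, fun i => i.elim, fun v xs hA hB => ?_⟩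
      constructor
      · intro heq
        exact absurd ((BoundedFormula.realize_bdEqual (Term.var g) (Term.var h)).mp heq).symm
          (cross_ne (hA h hsh) (hB g hsg))
      · rintro ⟨i, -⟩; exact i.elim
    · refine ⟨Unit, inferInstance, fun _ => ⊤,
        fun _ => Term.bdEqual (Term.var (Sum.inl (Sum.inl g))) (Term.var (Sum.inl (Sum.inl h))),
        fun v xs hA hB => ?_⟩
      refine Iff.trans (BoundedFormula.realize_bdEqual (Term.var g) (Term.var h)) ?_
      simp [realize_var_eq, proj, hsg, hsh]
  | rel R ts =>
    intro s
    cases R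
    obtain ⟨g, hg⟩ := term_var (ts 0)
    obtain ⟨h, hh⟩ := term_var (ts 1)
    have hbase : ∀ (v : β → T) (xs : Fin _ → T),
        ((BoundedFormula.rel (L := Language.order) Language.orderRel.le ts).Realize v xs ↔
          Sum.elim v xs g ≤ Sum.elim v xs h) := fun v xs =>
      (relMap_leSymb fun i => Term.realize (Sum.elim v xs) (ts i)).trans
        (by rw [hg, hh]; exact Iff.rfl)
    cases hsg : s g <;> cases hsh : s h
    · refine ⟨Unit, inferInstance,
        fun _ => Term.le (Term.var (Sum.inl (Sum.inl g))) (Term.var (Sum.inl (Sum.inl h))),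
        fun _ => ⊤, fun v xs hA hB => ?_⟩
      refine Iff.trans (hbase v xs) ?_
      simp [realize_var_le, proj, hsg, hsh]
    · -- g on false side, h on true side : w g ≤ w h ↔ w g ≤ a
      refine ⟨Unit, inferInstance,
        fun _ => Term.le (Term.var (Sum.inl (Sum.inl g))) (Term.var (Sum.inl (Sum.inr ()))),
        fun _ => ⊤, fun v xs hA hB => ?_⟩
      refine Iff.trans (hbase v xs) ?_
      rw [cross_le htree (hA g hsg) (hB h hsh)]
      simp [realize_var_le, proj, hsg]
    · -- g on true side, h on false side : never
      refine ⟨PEmpty, inferInstance, fun i => i.elim, fun i => i.elim, fun v xs hA hB => ?_⟩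
      constructor
      · intro hle
        exact absurd ((hbase v xs).mp hle) (cross_not_le (hA h hsh) (hB g hsg))
      · rintro ⟨i, -⟩; exact i.elim
    · refine ⟨Unit, inferInstance, fun _ => ⊤,
        fun _ => Term.le (Term.var (Sum.inl (Sum.inl g))) (Term.var (Sum.inl (Sum.inl h))),
        fun v xs hA hB => ?_⟩
      refine Iff.trans (hbase v xs) ?_
      simp [realize_var_le, proj, hsg, hsh]
  | imp φ₁ φ₂ ih₁ ih₂ =>
    intro s
    obtain ⟨I₁, instI₁, F₁, G₁, h₁⟩ := ih₁ s
    obtain ⟨I₂, instI₂, F₂, G₂, h₂⟩ := ih₂ s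
    haveI := instI₁; haveI := instI₂
    obtain ⟨J, instJ, F', G', hn⟩ := dnf_not (M := T) F₁ G₁
    haveI := instJ
    refine ⟨J ⊕ I₂, inferInstance, Sum.elim F' F₂, Sum.elim G' G₂, fun v xs hA hB => ?_⟩
    rw [BoundedFormula.realize_imp, imp_iff_not_or, h₁ v xs hA hB, h₂ v xs hA hB,
      hn (proj a s false (Sum.elim v xs)) (proj a s true (Sum.elim v xs)), Sum.exists]
    simp only [Sum.elim_inl, Sum.elim_inr]
  | all φ' ih =>
    intro s
    classical
    obtain ⟨I₁, instI₁, Fa, Ga, ha⟩ := ih (extS s false)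
    obtain ⟨I₂, instI₂, Fb, Gb, hb⟩ := ih (extS s true)
    haveI := instI₁; haveI := instI₂
    obtain ⟨J₁, instJ₁, Fa', Ga', hna⟩ := dnf_not (M := T) Fa Ga
    obtain ⟨J₂, instJ₂, Fb', Gb', hnb⟩ := dnf_not (M := T) Fb Gb
    haveI := instJ₁; haveI := instJ₂
    obtain ⟨J₁', instJ₁', FA2, GA2, hA2⟩ := dnf_not (M := T)
      (fun j => (guardT false ⊓ BoundedFormula.relabel lift1 (Fa' j)).ex)
      (fun j => (Ga' j).relabel drop1)
    obtain ⟨J₂', instJ₂', FB2, GB2, hB2⟩ := dnf_not (M := T)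
      (fun j => (Fb' j).relabel drop1)
      (fun j => (guardT true ⊓ BoundedFormula.relabel lift1 (Gb' j)).ex)
    haveI := instJ₁'; haveI := instJ₂'
    refine ⟨J₁' × J₂', inferInstance, fun p => FA2 p.1 ⊓ FB2 p.2, fun p => GA2 p.1 ⊓ GB2 p.2,
      fun v xs hA hB => ?_⟩
    have keyA : ∀ t, ¬ a ≤ t → ((¬ φ'.Realize v (Fin.snoc xs t)) ↔
        ∃ i, (Fa' i).Realize (proj a (extS s false) false (Sum.elim v (Fin.snoc xs t))) ∧
          (Ga' i).Realize (proj a (extS s false) true (Sum.elim v (Fin.snoc xs t)))) := by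
      intro t ht
      exact Iff.trans (not_congr (ha v (Fin.snoc xs t)
        (extS_cond_false a s false v xs t hA fun _ => ht)
        (extS_cond_true a s false v xs t hB fun hc => by simp at hc))) (hna _ _)
    have keyB : ∀ t, a ≤ t → ((¬ φ'.Realize v (Fin.snoc xs t)) ↔
        ∃ i, (Fb' i).Realize (proj a (extS s true) false (Sum.elim v (Fin.snoc xs t))) ∧
          (Gb' i).Realize (proj a (extS s true) true (Sum.elim v (Fin.snoc xs t)))) := by
      intro t ht
      exact Iff.trans (not_congr (hb v (Fin.snoc xs t)
        (extS_cond_false a s true v xs t hA fun hc => by simp at hc)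
        (extS_cond_true a s true v xs t hB fun _ => ht))) (hnb _ _)
    have hHA : ∀ j, (Formula.Realize ((guardT false ⊓ BoundedFormula.relabel lift1 (Fa' j)).ex)
          (proj a s false (Sum.elim v xs)) ↔
        ∃ t, ¬ a ≤ t ∧
          (Fa' j).Realize (proj a (extS s false) false (Sum.elim v (Fin.snoc xs t)))) := by
      intro j
      simpa using realize_guard_ex a s false (Fa' j) v xs
    have hHB : ∀ j, (Formula.Realize ((guardT true ⊓ BoundedFormula.relabel lift1 (Gb' j)).ex)
          (proj a s true (Sum.elim v xs)) ↔
        ∃ t, a ≤ t ∧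
          (Gb' j).Realize (proj a (extS s true) true (Sum.elim v (Fin.snoc xs t)))) := by
      intro j
      simpa using realize_guard_ex a s true (Gb' j) v xs
    have hKA : ∀ j t, (Formula.Realize ((Ga' j).relabel drop1) (proj a s true (Sum.elim v xs)) ↔
        (Ga' j).Realize (proj a (extS s false) true (Sum.elim v (Fin.snoc xs t)))) := by
      intro j t
      simpa using realize_drop a s false (Ga' j) v xs t
    have hKB : ∀ j t, (Formula.Realize ((Fb' j).relabel drop1) (proj a s false (Sum.elim v xs)) ↔
        (Fb' j).Realize (proj a (extS s true) false (Sum.elim v (Fin.snoc xs t)))) := by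
      intro j t
      simpa using realize_drop a s true (Fb' j) v xs t
    have hAside : (∀ t, ¬ a ≤ t → φ'.Realize v (Fin.snoc xs t)) ↔
        ∃ j, (FA2 j).Realize (proj a s false (Sum.elim v xs)) ∧
          (GA2 j).Realize (proj a s true (Sum.elim v xs)) := by
      rw [← hA2 (proj a s false (Sum.elim v xs)) (proj a s true (Sum.elim v xs))]
      constructor
      · rintro hall ⟨j, hH, hK⟩
        obtain ⟨t, ht, hf⟩ := (hHA j).mp hH
        exact ((keyA t ht).mpr ⟨j, hf, (hKA j t).mp hK⟩) (hall t ht)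
      · intro hno t ht
        by_contra hc
        obtain ⟨j, hf, hg2⟩ := (keyA t ht).mp hc
        exact hno ⟨j, (hHA j).mpr ⟨t, ht, hf⟩, (hKA j t).mpr hg2⟩
    have hBside : (∀ t, a ≤ t → φ'.Realize v (Fin.snoc xs t)) ↔
        ∃ j, (FB2 j).Realize (proj a s false (Sum.elim v xs)) ∧
          (GB2 j).Realize (proj a s true (Sum.elim v xs)) := by
      rw [← hB2 (proj a s false (Sum.elim v xs)) (proj a s true (Sum.elim v xs))]
      constructor
      · rintro hall ⟨j, hK, hH⟩
        obtain ⟨t, ht, hf⟩ := (hHB j).mp hH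
        exact ((keyB t ht).mpr ⟨j, (hKB j t).mp hK, hf⟩) (hall t ht)
      · intro hno t ht
        by_contra hc
        obtain ⟨j, hf, hg2⟩ := (keyB t ht).mp hc
        exact hno ⟨j, (hKB j t).mpr hf, (hHB j).mpr ⟨t, ht, hg2⟩⟩
    rw [BoundedFormula.realize_all]
    have split : (∀ t, φ'.Realize v (Fin.snoc xs t)) ↔
        ((∀ t, ¬ a ≤ t → φ'.Realize v (Fin.snoc xs t)) ∧
         (∀ t, a ≤ t → φ'.Realize v (Fin.snoc xs t))) := by
      constructor
      · exact fun h => ⟨fun t _ => h t, fun t _ => h t⟩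
      · rintro ⟨h1, h2⟩ t
        by_cases ht : a ≤ t
        · exact h2 t ht
        · exact h1 t ht
    rw [split, hAside, hBside]
    constructor
    · rintro ⟨⟨j1, hf1, hg1⟩, ⟨j2, hf2, hg2⟩⟩
      exact ⟨⟨j1, j2⟩, Formula.realize_inf.mpr ⟨hf1, hf2⟩, Formula.realize_inf.mpr ⟨hg1, hg2⟩⟩
    · rintro ⟨⟨j1, j2⟩, hf, hg⟩
      obtain ⟨hf1, hf2⟩ := Formula.realize_inf.mp hf
      obtain ⟨hg1, hg2⟩ := Formula.realize_inf.mp hg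
      exact ⟨⟨j1, hf1, hg1⟩, ⟨j2, hf2, hg2⟩⟩

end TreeFV

def rA (n m : ℕ) : ((((Fin n ⊕ Fin m) ⊕ Unit) ⊕ Fin 0) ⊕ Unit) → Fin n ⊕ Unit :=
  Sum.elim
    (Sum.elim (Sum.elim (Sum.elim (fun i => .inl i) (fun _ => .inr ())) (fun _ => .inr ()))
      (fun i => i.elim0))
    (fun _ => .inr ())

def rB (n m : ℕ) : ((((Fin n ⊕ Fin m) ⊕ Unit) ⊕ Fin 0) ⊕ Unit) → Fin m ⊕ Unit :=
  Sum.elim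
    (Sum.elim (Sum.elim (Sum.elim (fun _ => .inr ()) (fun j => .inl j)) (fun _ => .inr ()))
      (fun i => i.elim0))
    (fun _ => .inr ())

theorem statement_8 (T : Type u) [SemilatticeInf T]
    -- `T` is a tree: the set of points below any point is linearly ordered
    -- (infima of pairs exist by `SemilatticeInf`)
    (htree : ∀ x y z : T, y ≤ x → z ≤ x → y ≤ z ∨ z ≤ y)
    (a : T) (n m : ℕ)
    -- `x̄`, `x̄′` are tuples from the complement of the closed ball `D = {z : a ≤ z}`
    (x x' : Fin n → T) (hx : ∀ i, ¬a ≤ x i) (hx' : ∀ i, ¬a ≤ x' i)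
    -- `ȳ`, `ȳ′` are tuples from `D`
    (y y' : Fin m → T) (hy : ∀ j, a ≤ y j) (hy' : ∀ j, a ≤ y' j)
    -- `(x̄, a)` and `(x̄′, a)` have the same type
    (htx : ∀ φ : Language.order.Formula (Fin n ⊕ Unit),
      φ.Realize (Sum.elim x fun _ => a) ↔ φ.Realize (Sum.elim x' fun _ => a))
    -- `(ȳ, a)` and `(ȳ′, a)` have the same type
    (hty : ∀ φ : Language.order.Formula (Fin m ⊕ Unit),
      φ.Realize (Sum.elim y fun _ => a) ↔ φ.Realize (Sum.elim y' fun _ => a)) :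
    -- then `(x̄, ȳ, a)` and `(x̄′, ȳ′, a)` have the same type
    ∀ φ : Language.order.Formula ((Fin n ⊕ Fin m) ⊕ Unit),
      φ.Realize (Sum.elim (Sum.elim x y) fun _ => a) ↔
        φ.Realize (Sum.elim (Sum.elim x' y') fun _ => a) := by
  intro φ
  classical
  set s : ((Fin n ⊕ Fin m) ⊕ Unit) ⊕ Fin 0 → Bool :=
    Sum.elim (Sum.elim (Sum.elim (fun _ => false) (fun _ => true)) (fun _ => true))
      (fun i => i.elim0) with hs
  obtain ⟨I, instI, F, G, hFG⟩ := TreeFV.main htree a (k := 0) φ s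
  haveI := instI
  have condA : ∀ (x0 : Fin n → T) (y0 : Fin m → T), (∀ i, ¬ a ≤ x0 i) →
      ∀ g, s g = false →
        ¬ a ≤ Sum.elim (Sum.elim (Sum.elim x0 y0) fun _ => a) (default : Fin 0 → T) g := by
    intro x0 y0 hx0 g hg
    rcases g with (((i | j) | u) | i0)
    · exact hx0 i
    · simp [hs] at hg
    · simp [hs] at hg
    · exact i0.elim0
  have condB : ∀ (x0 : Fin n → T) (y0 : Fin m → T), (∀ j, a ≤ y0 j) →
      ∀ g, s g = true →
        a ≤ Sum.elim (Sum.elim (Sum.elim x0 y0) fun _ => a) (default : Fin 0 → T) g := by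
    intro x0 y0 hy0 g hg
    rcases g with (((i | j) | u) | i0)
    · simp [hs] at hg
    · exact hy0 j
    · exact le_refl a
    · exact i0.elim0
  have hprojA : ∀ (x0 : Fin n → T) (y0 : Fin m → T),
      TreeFV.proj a s false
          (Sum.elim (Sum.elim (Sum.elim x0 y0) fun _ => a) (default : Fin 0 → T)) =
        (Sum.elim x0 fun _ => a) ∘ rA n m := by
    intro x0 y0
    funext g
    rcases g with ((((i | j) | u) | i0) | u2)
    · simp [TreeFV.proj, hs, rA]
    · simp [TreeFV.proj, hs, rA]
    · simp [TreeFV.proj, hs, rA]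
    · exact i0.elim0
    · simp [TreeFV.proj, hs, rA]
  have hprojB : ∀ (x0 : Fin n → T) (y0 : Fin m → T),
      TreeFV.proj a s true
          (Sum.elim (Sum.elim (Sum.elim x0 y0) fun _ => a) (default : Fin 0 → T)) =
        (Sum.elim y0 fun _ => a) ∘ rB n m := by
    intro x0 y0
    funext g
    rcases g with ((((i | j) | u) | i0) | u2)
    · simp [TreeFV.proj, hs, rB]
    · simp [TreeFV.proj, hs, rB]
    · simp [TreeFV.proj, hs, rB]
    · exact i0.elim0
    · simp [TreeFV.proj, hs, rB]
  have hFA : ∀ (i : I) (x0 : Fin n → T) (y0 : Fin m → T),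
      (Formula.Realize (F i) (TreeFV.proj a s false
          (Sum.elim (Sum.elim (Sum.elim x0 y0) fun _ => a) (default : Fin 0 → T))) ↔
        Formula.Realize ((F i).relabel (rA n m)) (Sum.elim x0 fun _ => a)) := by
    intro i x0 y0
    rw [Formula.realize_relabel, ← hprojA x0 y0]
  have hGB : ∀ (i : I) (x0 : Fin n → T) (y0 : Fin m → T),
      (Formula.Realize (G i) (TreeFV.proj a s true
          (Sum.elim (Sum.elim (Sum.elim x0 y0) fun _ => a) (default : Fin 0 → T))) ↔
        Formula.Realize ((G i).relabel (rB n m)) (Sum.elim y0 fun _ => a)) := by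
    intro i x0 y0
    rw [Formula.realize_relabel, ← hprojB x0 y0]
  have h1 := hFG (Sum.elim (Sum.elim x y) fun _ => a) default (condA x y hx) (condB x y hy)
  have h2 := hFG (Sum.elim (Sum.elim x' y') fun _ => a) default (condA x' y' hx') (condB x' y' hy')
  refine Iff.trans h1 (Iff.trans ?_ h2.symm)
  refine exists_congr fun i => and_congr ?_ ?_
  · exact (hFA i x y).trans ((htx _).trans (hFA i x' y').symm)
  · exact (hGB i x y).trans ((hty _).trans (hGB i x' y').symm)
end

section
/- Let G be an ordered group (a group with a linear order ≤ such that a ≤ b implies c·a·d ≤ c·b·d for all c, d) and let x ∈ G. Let C(x) = {g ∈ G : g·x = x·g} be the centralizer of x and let D(x) = {y ∈ G : ∃ h₁, h₂ ∈ C(x), h₁ ≤ y ≤ h₂} be the convex hull of C(x). Assume that for every y ∈ D(x) there is an integer n ≥ 1 with y^n ∈ C(x). Then C(x) = D(x); in particular C(x) is a convex subset of G. -/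
theorem statement_16 {G : Type*} [Group G] [LinearOrder G]
    (hord : ∀ a b c d : G, a ≤ b → c * a * d ≤ c * b * d)
    (x : G) (C D : Set G)
    -- `C` is the centralizer of `x` and `D` is its convex hull
    (hC : C = {g : G | g * x = x * g})
    (hD : D = {y : G | ∃ h₁ ∈ C, ∃ h₂ ∈ C, h₁ ≤ y ∧ y ≤ h₂})
    -- every element of `D` has a power in `C`
    (hpow : ∀ y ∈ D, ∃ n : ℕ, 1 ≤ n ∧ y ^ n ∈ C) :
    -- then `C = D`; in particular `C` is convex
    C = D ∧ ∀ a ∈ C, ∀ b ∈ C, ∀ y : G, a ≤ y → y ≤ b → y ∈ C := by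
  have hmul : ∀ a b c d : G, a < b → c * a * d < c * b * d := by
    intro a b c d h
    refine lt_of_le_of_ne (hord _ _ _ _ h.le) fun he => ?_
    exact absurd (mul_left_cancel (mul_right_cancel he)) h.ne
  have key : ∀ y : G, ∀ n : ℕ, 1 ≤ n → y ^ n * x = x * y ^ n → y * x = x * y := by
    intro y n hn hyn
    rcases lt_trichotomy (y * x) (x * y) with h | h | h
    · exfalso
      have main : ∀ m : ℕ, 1 ≤ m → y ^ m * x < x * y ^ m := by
        intro m hm
        induction m with
        | zero => omega
        | succ k ih =>
          rcases Nat.eq_zero_or_pos k with hk | hk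
          · subst hk; simpa using h
          · have hk' := ih hk
            have h1 : y * (y ^ k * x) < y * (x * y ^ k) := by
              simpa using hmul _ _ y 1 hk'
            have h2 : (y * x) * y ^ k < (x * y) * y ^ k := by
              simpa using hmul _ _ 1 (y ^ k) h
            calc y ^ (k + 1) * x = y * (y ^ k * x) := by
                  rw [pow_succ']; group
              _ < y * (x * y ^ k) := h1
              _ = (y * x) * y ^ k := by group
              _ < (x * y) * y ^ k := h2
              _ = x * y ^ (k + 1) := by rw [pow_succ']; group
      exact absurd hyn (main n hn).ne
    · exact h
    · exfalso
      have main : ∀ m : ℕ, 1 ≤ m → x * y ^ m < y ^ m * x := by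
        intro m hm
        induction m with
        | zero => omega
        | succ k ih =>
          rcases Nat.eq_zero_or_pos k with hk | hk
          · subst hk; simpa using h
          · have hk' := ih hk
            have h1 : y * (x * y ^ k) < y * (y ^ k * x) := by
              simpa using hmul _ _ y 1 hk'
            have h2 : (x * y) * y ^ k < (y * x) * y ^ k := by
              simpa using hmul _ _ 1 (y ^ k) h
            calc x * y ^ (k + 1) = (x * y) * y ^ k := by
                  rw [pow_succ']; group
              _ < (y * x) * y ^ k := h2
              _ = y * (x * y ^ k) := by group
              _ < y * (y ^ k * x) := h1
              _ = y ^ (k + 1) * x := by rw [pow_succ']; group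
      exact absurd hyn (main n hn).ne'
  subst hC hD
  have hDC : ∀ y : G,
      y ∈ {y : G | ∃ h₁ ∈ {g : G | g * x = x * g}, ∃ h₂ ∈ {g : G | g * x = x * g},
        h₁ ≤ y ∧ y ≤ h₂} → y * x = x * y := by
    intro y hy
    obtain ⟨n, hn, hc⟩ := hpow y hy
    exact key y n hn hc
  constructor
  · ext y
    simp only [Set.mem_setOf_eq]
    constructor
    · intro h
      exact ⟨y, h, y, h, le_refl y, le_refl y⟩
    · intro h
      exact hDC y h
  · intro a ha b hb y hay hyb
    exact hDC y ⟨a, ha, b, hb, hay, hyb⟩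
end

section
/- Let G be a linearly ordered abelian group (written additively, with the order translation-invariant), let ν ∈ G with ν > 0, and let L = {g ∈ G : −ν < g < ν}. Let Z ⊆ L be a set such that: 0 ∈ Z; −g ∈ Z whenever g ∈ Z; and for all g₁, g₂ ∈ Z, either g₁ + g₂ ∈ Z or g₁ + g₂ ∉ L. Then there exists a subgroup H of G with Z = H ∩ L. -/
private lemma exists_min_multiset {α : Type*} [LinearOrder α] (s : Multiset α) (h : s ≠ 0) :
    ∃ a ∈ s, ∀ x ∈ s, a ≤ x := by
  induction s using Multiset.induction with
  | empty => simp at h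
  | cons a t ih =>
    by_cases ht : t = 0
    · subst ht
      exact ⟨a, Multiset.mem_cons_self a 0, by simp⟩
    · obtain ⟨b, hb, hbmin⟩ := ih ht
      rcases le_total a b with hab | hab
      · refine ⟨a, Multiset.mem_cons_self a t, fun x hx => ?_⟩
        rcases Multiset.mem_cons.1 hx with rfl | hx
        · exact le_refl x
        · exact le_trans hab (hbmin x hx)
      · refine ⟨b, Multiset.mem_cons_of_mem hb, fun x hx => ?_⟩
        rcases Multiset.mem_cons.1 hx with rfl | hx
        · exact hab
        · exact hbmin x hx

private lemma exists_max_multiset {α : Type*} [LinearOrder α] (s : Multiset α) (h : s ≠ 0) :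
    ∃ a ∈ s, ∀ x ∈ s, x ≤ a := by
  induction s using Multiset.induction with
  | empty => simp at h
  | cons a t ih =>
    by_cases ht : t = 0
    · subst ht
      exact ⟨a, Multiset.mem_cons_self a 0, by simp⟩
    · obtain ⟨b, hb, hbmax⟩ := ih ht
      rcases le_total a b with hab | hab
      · refine ⟨b, Multiset.mem_cons_of_mem hb, fun x hx => ?_⟩
        rcases Multiset.mem_cons.1 hx with rfl | hx
        · exact hab
        · exact hbmax x hx
      · refine ⟨a, Multiset.mem_cons_self a t, fun x hx => ?_⟩
        rcases Multiset.mem_cons.1 hx with rfl | hx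
        · exact le_refl x
        · exact le_trans (hbmax x hx) hab

private lemma multiset_sum_nonpos {α : Type*} [AddCommGroup α] [PartialOrder α] [IsOrderedAddMonoid α] (s : Multiset α)
    (h : ∀ x ∈ s, x ≤ 0) : s.sum ≤ 0 := by
  induction s using Multiset.induction with
  | empty => simp
  | cons a t ih =>
    rw [Multiset.sum_cons]
    exact add_nonpos (h a (Multiset.mem_cons_self a t))
      (ih fun x hx => h x (Multiset.mem_cons_of_mem hx))

theorem statement_18 {G : Type*} [AddCommGroup G] [LinearOrder G] [IsOrderedAddMonoid G]
    (ν : G) (hν : 0 < ν) (L Z : Set G)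
    (hL : L = Set.Ioo (-ν) ν) (hZL : Z ⊆ L)
    (h0 : (0 : G) ∈ Z)
    (hneg : ∀ g ∈ Z, -g ∈ Z)
    (hadd : ∀ g₁ ∈ Z, ∀ g₂ ∈ Z, g₁ + g₂ ∈ Z ∨ g₁ + g₂ ∉ L) :
    ∃ H : AddSubgroup G, Z = ↑H ∩ L := by
  classical
  subst hL
  -- key lemma: sums of Z-elements that lie in L are in Z
  have key : ∀ n (s : Multiset G), s.card = n → (∀ g ∈ s, g ∈ Z) →
      s.sum ∈ Set.Ioo (-ν) ν → s.sum ∈ Z := by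
    intro n
    induction n using Nat.strong_induction_on with
    | _ n ih =>
      intro s hcard hs hsum
      rcases Nat.lt_or_ge n 2 with hn | hn
      · interval_cases n
        · rw [Multiset.card_eq_zero] at hcard; subst hcard; simpa using h0
        · rw [Multiset.card_eq_one] at hcard
          obtain ⟨a, rfl⟩ := hcard
          simpa using hs a (by simp)
      · -- pick min a and max b of the rest
        have hs0 : s ≠ 0 := by
          intro h; subst h; simp at hcard; omega
        obtain ⟨a, ha, hamin⟩ := exists_min_multiset s hs0
        have he0 : s.erase a ≠ 0 := by
          intro h
          have := Multiset.card_erase_of_mem ha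
          rw [h] at this
          simp at this; omega
        obtain ⟨b, hb, hbmax⟩ := exists_max_multiset (s.erase a) he0
        set t := (s.erase a).erase b with ht
        have hsplit : s = a ::ₘ b ::ₘ t := by
          rw [ht, Multiset.cons_erase hb, Multiset.cons_erase ha]
        have hbmem : b ∈ s := Multiset.mem_of_mem_erase hb
        have hssum : s.sum = (a + b) + t.sum := by
          rw [hsplit]; simp [add_assoc]
        have haL := hZL (hs a ha)
        have hbL := hZL (hs b hbmem)
        have htZ : ∀ g ∈ t, g ∈ Z := fun g hg =>
          hs g (Multiset.mem_of_mem_erase (Multiset.mem_of_mem_erase hg))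
        -- a + b ∈ L
        have habL : a + b ∈ Set.Ioo (-ν) ν := by
          by_contra hcon
          rw [Set.mem_Ioo, not_and_or, not_lt, not_lt] at hcon
          rcases hcon with h1 | h2
          · -- a + b ≤ -ν : everything negative
            have hbneg : b < 0 := by
              have h := lt_of_le_of_lt h1 haL.1
              exact lt_of_add_lt_add_left (by rwa [add_zero] : a + b < a + 0)
            have htneg : ∀ g ∈ t, g ≤ 0 := fun g hg =>
              le_of_lt (lt_of_le_of_lt (hbmax g (Multiset.mem_of_mem_erase hg)) hbneg)
            have htle : t.sum ≤ 0 := multiset_sum_nonpos t htneg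
            have hle : s.sum ≤ -ν := by
              rw [hssum]
              exact le_trans (add_le_of_nonpos_right htle) h1
            exact absurd hsum.1 (not_lt.2 hle)
          · -- ν ≤ a + b : everything positive
            have hapos : 0 < a := by
              have h := lt_of_lt_of_le hbL.2 h2
              exact lt_of_add_lt_add_left (by rw [add_zero, add_comm]; exact h : b + 0 < b + a)
            have htpos : ∀ g ∈ t, 0 ≤ g := fun g hg =>
              le_of_lt (lt_of_lt_of_le hapos
                (hamin g (Multiset.mem_of_mem_erase (Multiset.mem_of_mem_erase hg))))
            have htge : 0 ≤ t.sum := Multiset.sum_nonneg htpos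
            have hge : ν ≤ s.sum := by
              rw [hssum]
              exact le_trans h2 (le_add_of_nonneg_right htge)
            exact absurd hsum.2 (not_lt.2 hge)
        have habZ : a + b ∈ Z := by
          rcases hadd a (hs a ha) b (hs b hbmem) with h | h
          · exact h
          · exact absurd habL h
        -- recurse on (a+b) ::ₘ t
        have hcard' : ((a + b) ::ₘ t).card = n - 1 := by
          have h1c : n = Multiset.card t + 2 := by
            rw [← hcard, hsplit]; simp
          simp only [Multiset.card_cons]
          omega
        have hsum' : ((a + b) ::ₘ t).sum = s.sum := by
          simp [hssum]
        have := ih (n - 1) (by omega) ((a + b) ::ₘ t) hcard'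
          (fun g hg => by
            rcases Multiset.mem_cons.1 hg with rfl | hg
            · exact habZ
            · exact htZ g hg)
          (by rw [hsum']; exact hsum)
        rwa [hsum'] at this
  refine ⟨AddSubgroup.closure Z, ?_⟩
  ext g
  constructor
  · intro hg
    exact ⟨AddSubgroup.subset_closure hg, hZL hg⟩
  · rintro ⟨hgH, hgL⟩
    -- every element of the closure is a sum of a multiset of Z-elements
    have hrep : ∃ s : Multiset G, (∀ x ∈ s, x ∈ Z) ∧ s.sum = g := by
      refine AddSubgroup.closure_induction ?_ ?_ ?_ ?_ hgH
      · intro x hx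
        refine ⟨{x}, fun y hy => ?_, by simp⟩
        rw [Multiset.mem_singleton] at hy
        subst hy; exact hx
      · exact ⟨0, by simp, by simp⟩
      · rintro x y _ _ ⟨s, hsZ, rfl⟩ ⟨u, huZ, rfl⟩
        refine ⟨s + u, fun z hz => ?_, by simp⟩
        rcases Multiset.mem_add.1 hz with h | h
        · exact hsZ z h
        · exact huZ z h
      · rintro x _ ⟨s, hsZ, rfl⟩
        refine ⟨s.map (fun z => -z), fun z hz => ?_, by
          simp [Multiset.sum_map_neg']⟩
        obtain ⟨w, hw, rfl⟩ := Multiset.mem_map.1 hz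
        exact hneg w (hsZ w hw)
    obtain ⟨s, hsZ, rfl⟩ := hrep
    exact key s.card s rfl hsZ hgL
end
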